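/- arXiv:0906.2605 — 2 statements merged into one kernel-verified Lean document; each statement's English description precedes it below -/
import Mathlib

section
/- There is exactly one left-invariant total order ≺ on the braid group B_3 satisfying 1 ≺ σ1σ2 and 1 ≺ σ2^{-1}. -/
/-- The single braid relation of `B₃`: σ₁σ₂σ₁ = σ₂σ₁σ₂. -/
def braidRels3 : Set (FreeGroup (Fin 2)) :=
  { FreeGroup.of 0 * FreeGroup.of 1 * FreeGroup.of 0 *
      (FreeGroup.of 1 * FreeGroup.of 0 * FreeGroup.of 1)⁻¹ }

/-- The braid group `B₃ = ⟨σ₁, σ₂ | σ₁σ₂σ₁ = σ₂σ₁σ₂⟩`. -/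
abbrev B₃ : Type := PresentedGroup braidRels3

def σ₁ : B₃ := PresentedGroup.of 0
def σ₂ : B₃ := PresentedGroup.of 1

/-- A left-invariant total order (left order) on a group `G`. -/
def IsLeftOrder {G : Type*} [Group G] (r : G → G → Prop) : Prop :=
  IsStrictTotalOrder G r ∧ ∀ h f g : G, r f g → r (h * f) (h * g)


namespace B3DD

inductive Syl : Type
  | u1 | u2 | dd
  deriving DecidableEq

open Syl

def Syl.isD : Syl → Bool
  | .dd => true
  | _ => false

abbrev SR (a b : Syl) : Prop := a.isD ≠ b.isD

abbrev Alt (l : List Syl) : Prop := l.Chain' SR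

def pU : ℤ × List Syl → ℤ × List Syl
  | (t, []) => (t, [u1])
  | (t, u1 :: r) => (t, u2 :: r)
  | (t, u2 :: r) => (t + 1, r)
  | (t, dd :: r) => (t, u1 :: dd :: r)

def pUi : ℤ × List Syl → ℤ × List Syl
  | (t, []) => (t - 1, [u2])
  | (t, u1 :: r) => (t, r)
  | (t, u2 :: r) => (t, u1 :: r)
  | (t, dd :: r) => (t - 1, u2 :: dd :: r)

def pD : ℤ × List Syl → ℤ × List Syl
  | (t, []) => (t, [dd])
  | (t, u1 :: r) => (t, dd :: u1 :: r)
  | (t, u2 :: r) => (t, dd :: u2 :: r)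
  | (t, dd :: r) => (t + 1, r)

def pDi : ℤ × List Syl → ℤ × List Syl
  | (t, []) => (t - 1, [dd])
  | (t, u1 :: r) => (t - 1, dd :: u1 :: r)
  | (t, u2 :: r) => (t - 1, dd :: u2 :: r)
  | (t, dd :: r) => (t, r)

lemma alt_pU {t : ℤ} {l : List Syl} (h : Alt l) : Alt (pU (t, l)).2 := by
  rcases l with _ | ⟨s, r⟩
  · simp [pU, Alt, List.Chain']
  cases s
  · exact List.isChain_cons.2 ⟨fun b hb => (List.isChain_cons.1 h).1 b hb, (List.isChain_cons.1 h).2⟩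
  · exact h.tail
  · exact List.isChain_cons.2 ⟨by simp [SR, Syl.isD], h⟩

lemma alt_pUi {t : ℤ} {l : List Syl} (h : Alt l) : Alt (pUi (t, l)).2 := by
  rcases l with _ | ⟨s, r⟩
  · simp [pUi, Alt, List.Chain']
  cases s
  · exact h.tail
  · exact List.isChain_cons.2 ⟨fun b hb => (List.isChain_cons.1 h).1 b hb, (List.isChain_cons.1 h).2⟩
  · exact List.isChain_cons.2 ⟨by simp [SR, Syl.isD], h⟩

lemma alt_pD {t : ℤ} {l : List Syl} (h : Alt l) : Alt (pD (t, l)).2 := by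
  rcases l with _ | ⟨s, r⟩
  · simp [pD, Alt, List.Chain']
  cases s
  · exact List.isChain_cons.2 ⟨by simp [SR, Syl.isD], h⟩
  · exact List.isChain_cons.2 ⟨by simp [SR, Syl.isD], h⟩
  · exact h.tail

lemma alt_pDi {t : ℤ} {l : List Syl} (h : Alt l) : Alt (pDi (t, l)).2 := by
  rcases l with _ | ⟨s, r⟩
  · simp [pDi, Alt, List.Chain']
  cases s
  · exact List.isChain_cons.2 ⟨by simp [SR, Syl.isD], h⟩
  · exact List.isChain_cons.2 ⟨by simp [SR, Syl.isD], h⟩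
  · exact h.tail

lemma pU_pUi {t : ℤ} {l : List Syl} (h : Alt l) : pU (pUi (t, l)) = (t, l) := by
  rcases l with _ | ⟨s, r⟩
  · simp [pU, pUi]
  cases s
  · rcases r with _ | ⟨s', r'⟩
    · rfl
    cases s'
    · exact absurd rfl (List.isChain_cons_cons.1 h).1
    · exact absurd rfl (List.isChain_cons_cons.1 h).1
    · rfl
  · rfl
  · show ((t : ℤ) - 1 + 1, _) = _
    rw [sub_add_cancel]

lemma pUi_pU {t : ℤ} {l : List Syl} (h : Alt l) : pUi (pU (t, l)) = (t, l) := by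
  rcases l with _ | ⟨s, r⟩
  · simp [pU, pUi]
  cases s
  · rfl
  · rcases r with _ | ⟨s', r'⟩
    · show ((t : ℤ) + 1 - 1, _) = _
      rw [add_sub_cancel_right]
    cases s'
    · exact absurd rfl (List.isChain_cons_cons.1 h).1
    · exact absurd rfl (List.isChain_cons_cons.1 h).1
    · show ((t : ℤ) + 1 - 1, _) = _
      rw [add_sub_cancel_right]
  · rfl

lemma pD_pDi {t : ℤ} {l : List Syl} (h : Alt l) : pD (pDi (t, l)) = (t, l) := by
  rcases l with _ | ⟨s, r⟩
  · show ((t : ℤ) - 1 + 1, _) = _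
    rw [sub_add_cancel]
  cases s
  · show ((t : ℤ) - 1 + 1, _) = _
    rw [sub_add_cancel]
  · show ((t : ℤ) - 1 + 1, _) = _
    rw [sub_add_cancel]
  · rcases r with _ | ⟨s', r'⟩
    · rfl
    cases s'
    · rfl
    · rfl
    · exact absurd rfl (List.isChain_cons_cons.1 h).1

lemma pDi_pD {t : ℤ} {l : List Syl} (h : Alt l) : pDi (pD (t, l)) = (t, l) := by
  rcases l with _ | ⟨s, r⟩
  · rfl
  cases s
  · rfl
  · rfl
  · rcases r with _ | ⟨s', r'⟩
    · show ((t : ℤ) + 1 - 1, _) = _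
      rw [add_sub_cancel_right]
    cases s'
    · show ((t : ℤ) + 1 - 1, _) = _
      rw [add_sub_cancel_right]
    · show ((t : ℤ) + 1 - 1, _) = _
      rw [add_sub_cancel_right]
    · exact absurd rfl (List.isChain_cons_cons.1 h).1

/-- `u³ = z`: pushing u three times is the central shift. -/
lemma pU_three {t : ℤ} {l : List Syl} (h : Alt l) : pU (pU (pU (t, l))) = (t + 1, l) := by
  rcases l with _ | ⟨s, r⟩
  · rfl
  cases s
  · rcases r with _ | ⟨s', r'⟩
    · rfl
    cases s'
    · exact absurd rfl (List.isChain_cons_cons.1 h).1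
    · exact absurd rfl (List.isChain_cons_cons.1 h).1
    · rfl
  · rcases r with _ | ⟨s', r'⟩
    · rfl
    cases s'
    · exact absurd rfl (List.isChain_cons_cons.1 h).1
    · exact absurd rfl (List.isChain_cons_cons.1 h).1
    · rfl
  · rfl

/-- `Δ² = z`. -/
lemma pD_two {t : ℤ} {l : List Syl} (h : Alt l) : pD (pD (t, l)) = (t + 1, l) := by
  rcases l with _ | ⟨s, r⟩
  · rfl
  cases s
  · rfl
  · rfl
  · rcases r with _ | ⟨s', r'⟩
    · rfl
    cases s'
    · rfl
    · rfl
    · exact absurd rfl (List.isChain_cons_cons.1 h).1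

end B3DD

namespace B3DD

open Syl

lemma braid : σ₁ * σ₂ * σ₁ = σ₂ * σ₁ * σ₂ := by
  have h : (PresentedGroup.mk braidRels3) (FreeGroup.of 0 * FreeGroup.of 1 * FreeGroup.of 0 *
      (FreeGroup.of 1 * FreeGroup.of 0 * FreeGroup.of 1)⁻¹) = 1 := by
    apply (QuotientGroup.eq_one_iff _).2
    apply Subgroup.subset_normalClosure
    rfl
  rw [map_mul, map_mul, map_inv, map_mul, map_mul, mul_inv_eq_one] at h
  exact h

lemma braid' : σ₂ * (σ₁ * σ₂) = σ₁ * (σ₂ * σ₁) := by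
  simpa [mul_assoc] using braid.symm

def uu : B₃ := σ₁ * σ₂
def dl : B₃ := σ₁ * σ₂ * σ₁
def zz : B₃ := dl * dl

lemma u_cubed : uu * uu * uu = zz := by
  have h : uu * uu * uu = dl * (σ₂ * σ₁ * σ₂) := by rw [uu, dl]; group
  rw [h, ← braid, zz, dl]

lemma dl_s1 : dl * σ₁ = σ₂ * dl := by
  have h : dl * σ₁ = σ₂ * σ₁ * σ₂ * σ₁ := by rw [dl, braid]
  rw [h, dl]; group

lemma dl_s2 : dl * σ₂ = σ₁ * dl := by
  have h : dl * σ₂ = σ₁ * (σ₂ * σ₁ * σ₂) := by rw [dl]; group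
  rw [h, ← braid, dl]

lemma zz_s1 : zz * σ₁ = σ₁ * zz := by
  rw [zz, mul_assoc, dl_s1, ← mul_assoc, dl_s2, mul_assoc]

lemma zz_s2 : zz * σ₂ = σ₂ * zz := by
  rw [zz, mul_assoc, dl_s2, ← mul_assoc, dl_s1, mul_assoc]

lemma zz_central (g : B₃) : Commute zz g := by
  have : g ∈ Subgroup.centralizer ({zz} : Set B₃) := by
    apply PresentedGroup.generated_by
    intro j
    rw [Subgroup.mem_centralizer_iff]
    intro h hh
    rcases hh with rfl
    fin_cases j
    · exact zz_s1
    · exact zz_s2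
  exact Subgroup.mem_centralizer_iff.1 this zz rfl

lemma swap_zz (g p : B₃) (t : ℤ) : g * (zz ^ t * p) = zz ^ t * (g * p) := by
  rw [← mul_assoc, ← ((zz_central g).zpow_left t).eq, mul_assoc]

/-! ### The space of normal forms and the action of `B₃` on it -/

abbrev T : Type := ℤ × {l : List Syl // Alt l}

def base : T := (0, ⟨[], List.isChain_nil⟩)

def raw (x : T) : ℤ × List Syl := (x.1, x.2.1)

lemma T.ext {x y : T} (h : raw x = raw y) : x = y := by
  rcases x with ⟨t, l, hl⟩; rcases y with ⟨s, m, hm⟩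
  simp only [raw, Prod.mk.injEq] at h
  simp [h.1, h.2]

def TU : Equiv.Perm T where
  toFun x := ((pU (raw x)).1, ⟨(pU (raw x)).2, alt_pU x.2.2⟩)
  invFun x := ((pUi (raw x)).1, ⟨(pUi (raw x)).2, alt_pUi x.2.2⟩)
  left_inv x := T.ext (pUi_pU x.2.2)
  right_inv x := T.ext (pU_pUi x.2.2)

def TD : Equiv.Perm T where
  toFun x := ((pD (raw x)).1, ⟨(pD (raw x)).2, alt_pD x.2.2⟩)
  invFun x := ((pDi (raw x)).1, ⟨(pDi (raw x)).2, alt_pDi x.2.2⟩)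
  left_inv x := T.ext (pDi_pD x.2.2)
  right_inv x := T.ext (pD_pDi x.2.2)

lemma raw_TU (x : T) : raw (TU x) = pU (raw x) := rfl
lemma raw_TD (x : T) : raw (TD x) = pD (raw x) := rfl
lemma raw_TU_inv (x : T) : raw (TU⁻¹ x) = pUi (raw x) := rfl
lemma raw_TD_inv (x : T) : raw (TD⁻¹ x) = pDi (raw x) := rfl

lemma hU3 : TU * TU * TU = TD * TD := by
  apply Equiv.ext
  rintro ⟨t, l, hl⟩
  apply T.ext
  show pU (pU (pU (t, l))) = pD (pD (t, l))
  rw [pU_three hl, pD_two hl]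

def PS1 : Equiv.Perm T := TU⁻¹ * TD
def PS2 : Equiv.Perm T := TD⁻¹ * (TU * TU)

lemma braidP1 : PS1 * PS2 * PS1 = TD := by
  rw [PS1, PS2]; group

lemma braidP2 : PS2 * PS1 * PS2 = TD := by
  have h : PS2 * PS1 * PS2 = TD⁻¹ * (TU * TU * TU) := by rw [PS1, PS2]; group
  rw [h, hU3]; group

lemma braidP : PS1 * PS2 * PS1 = PS2 * PS1 * PS2 := by rw [braidP1, braidP2]

lemma hrels : ∀ r ∈ braidRels3, FreeGroup.lift ![PS1, PS2] r = 1 := by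
  intro r hr
  rcases hr with rfl
  simp only [map_mul, map_inv, FreeGroup.lift_apply_of, Matrix.cons_val_zero, Matrix.cons_val_one,
    Matrix.head_cons, mul_inv_eq_one]
  exact braidP

def L : B₃ →* Equiv.Perm T := PresentedGroup.toGroup hrels

lemma L_s1 : L σ₁ = PS1 := by
  rw [σ₁, L, PresentedGroup.toGroup.of]
  simp

lemma L_s2 : L σ₂ = PS2 := by
  rw [σ₂, L, PresentedGroup.toGroup.of]
  simp

lemma L_u : L uu = TU := by
  rw [uu, map_mul, L_s1, L_s2, PS1, PS2]; group

lemma L_dl : L dl = TD := by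
  rw [dl, map_mul, map_mul, L_s1, L_s2]
  exact braidP1

lemma L_zz : L zz = TD * TD := by rw [zz, map_mul, L_dl]

end B3DD

namespace B3DD

open Syl

def evS : Syl → B₃
  | .u1 => uu
  | .u2 => uu * uu
  | .dd => dl

def evR : ℤ × List Syl → B₃ := fun p => zz ^ p.1 * (p.2.map evS).prod

def ev (x : T) : B₃ := evR (raw x)

def ι (g : B₃) : T := L g base

lemma zz_def : zz = dl * dl := rfl

lemma evR_pU (t : ℤ) (l : List Syl) : evR (pU (t, l)) = uu * evR (t, l) := by
  rcases l with _ | ⟨s, r⟩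
  · simpa [evR, pU, evS] using ((zz_central uu).zpow_left t).eq
  cases s
  · simp only [pU, evR, List.map_cons, List.prod_cons, evS, swap_zz, mul_assoc]
  · simp only [pU, evR, List.map_cons, List.prod_cons, evS, swap_zz]
    rw [zpow_add_one, mul_assoc]
    congr 1
    rw [← mul_assoc, ← mul_assoc, u_cubed]
  · simp only [pU, evR, List.map_cons, List.prod_cons, evS, swap_zz, mul_assoc]

lemma evR_pD (t : ℤ) (l : List Syl) : evR (pD (t, l)) = dl * evR (t, l) := by
  rcases l with _ | ⟨s, r⟩
  · simpa [evR, pD, evS] using ((zz_central dl).zpow_left t).eq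
  cases s
  · simp only [pD, evR, List.map_cons, List.prod_cons, evS, swap_zz, mul_assoc]
  · simp only [pD, evR, List.map_cons, List.prod_cons, evS, swap_zz, mul_assoc]
  · simp only [pD, evR, List.map_cons, List.prod_cons, evS, swap_zz]
    rw [zpow_add_one, mul_assoc]
    congr 1
    rw [← mul_assoc, ← zz_def]

lemma ev_TU (x : T) : ev (TU x) = uu * ev x := by
  rcases x with ⟨t, l, hl⟩
  exact evR_pU t l

lemma ev_TD (x : T) : ev (TD x) = dl * ev x := by
  rcases x with ⟨t, l, hl⟩
  exact evR_pD t l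

lemma ev_TU_inv (x : T) : ev (TU⁻¹ x) = uu⁻¹ * ev x := by
  have h := ev_TU (TU⁻¹ x)
  rw [show TU (TU⁻¹ x) = x from Equiv.apply_symm_apply TU x] at h
  rw [h, inv_mul_cancel_left]

lemma ev_TD_inv (x : T) : ev (TD⁻¹ x) = dl⁻¹ * ev x := by
  have h := ev_TD (TD⁻¹ x)
  rw [show TD (TD⁻¹ x) = x from Equiv.apply_symm_apply TD x] at h
  rw [h, inv_mul_cancel_left]

lemma s1_eq : uu⁻¹ * dl = σ₁ := by rw [uu, dl]; group

lemma s2_eq : dl⁻¹ * (uu * uu) = σ₂ := by rw [uu, dl]; group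

lemma ev_L (g : B₃) : ∀ x : T, ev (L g x) = g * ev x := by
  have key : ∀ (h : B₃), (∀ x, ev (L h x) = h * ev x) →
      ∀ x, ev (L h⁻¹ x) = h⁻¹ * ev x := by
    intro h hh x
    have h2 := hh (L h⁻¹ x)
    rw [← Equiv.Perm.mul_apply, ← map_mul, mul_inv_cancel, map_one, Equiv.Perm.one_apply] at h2
    rw [h2, inv_mul_cancel_left]
  have hs1 : ∀ x, ev (L σ₁ x) = σ₁ * ev x := by
    intro x
    rw [L_s1, PS1, Equiv.Perm.mul_apply, ev_TU_inv, ev_TD, ← mul_assoc, s1_eq]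
  have hs2 : ∀ x, ev (L σ₂ x) = σ₂ * ev x := by
    intro x
    rw [L_s2, PS2, Equiv.Perm.mul_apply, Equiv.Perm.mul_apply, ev_TD_inv, ev_TU, ev_TU,
      ← mul_assoc, ← mul_assoc, mul_assoc dl⁻¹, s2_eq]
  induction g using PresentedGroup.induction_on with
  | _ w =>
    induction w using FreeGroup.induction_on with
    | C1 => intro x; simp
    | of i =>
      fin_cases i
      · exact hs1
      · exact hs2
    | inv_of i h =>
      intro x
      have h2 := key _ h x
      simpa [map_inv] using h2
    | mul a b ha hb =>
      intro x
      rw [map_mul, map_mul, Equiv.Perm.mul_apply, ha, hb, mul_assoc]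

lemma ev_base : ev base = 1 := by simp [ev, base, raw, evR]

lemma ev_ι (g : B₃) : ev (ι g) = g := by
  rw [ι, ev_L, ev_base, mul_one]

end B3DD

namespace B3DD

open Syl

def TZ : Equiv.Perm T where
  toFun x := (x.1 + 1, x.2)
  invFun x := (x.1 - 1, x.2)
  left_inv x := by simp
  right_inv x := by simp

lemma L_zz_eq : L zz = TZ := by
  rw [L_zz]
  apply Equiv.ext
  rintro ⟨t, l, hl⟩
  apply T.ext
  show pD (pD (t, l)) = (t + 1, l)
  exact pD_two hl

lemma TZ_pow (t : ℤ) : ∀ x : T, (TZ ^ t) x = (x.1 + t, x.2) := by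
  induction t using Int.induction_on with
  | zero => intro x; simp
  | succ n ih =>
    intro x
    rw [zpow_add_one, Equiv.Perm.mul_apply, ih]
    show ((x.1 + 1) + (n : ℤ), x.2) = _
    rw [Prod.mk.injEq]
    constructor
    · push_cast; ring
    · rfl
  | pred n ih =>
    intro x
    rw [zpow_sub_one, Equiv.Perm.mul_apply, ih]
    show ((x.1 - 1) + (-n : ℤ), x.2) = _
    rw [Prod.mk.injEq]
    constructor
    · push_cast; ring
    · rfl

lemma ι_mul (g h : B₃) : ι (g * h) = L g (ι h) := by
  rw [ι, ι, map_mul]; rfl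

lemma ι_prod : ∀ (l : List Syl) (hl : Alt l), ι ((l.map evS).prod) = (0, ⟨l, hl⟩) := by
  intro l
  induction l with
  | nil => intro hl; simp only [List.map_nil, List.prod_nil]; rw [ι, map_one]; rfl
  | cons s r ih =>
    intro hl
    rw [List.map_cons, List.prod_cons, ι_mul, ih hl.tail]
    apply T.ext
    cases s
    · rw [evS, L_u]
      show pU (0, r) = (0, u1 :: r)
      rcases r with _ | ⟨s', r'⟩
      · rfl
      cases s'
      · exact absurd rfl (List.isChain_cons_cons.1 hl).1
      · exact absurd rfl (List.isChain_cons_cons.1 hl).1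
      · rfl
    · rw [evS, map_mul, L_u]
      show pU (pU (0, r)) = (0, u2 :: r)
      rcases r with _ | ⟨s', r'⟩
      · rfl
      cases s'
      · exact absurd rfl (List.isChain_cons_cons.1 hl).1
      · exact absurd rfl (List.isChain_cons_cons.1 hl).1
      · rfl
    · rw [evS, L_dl]
      show pD (0, r) = (0, dd :: r)
      rcases r with _ | ⟨s', r'⟩
      · rfl
      cases s'
      · rfl
      · rfl
      · exact absurd rfl (List.isChain_cons_cons.1 hl).1

lemma ι_ev (x : T) : ι (ev x) = x := by
  rcases x with ⟨t, l, hl⟩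
  show ι (zz ^ t * (l.map evS).prod) = _
  rw [ι_mul, ι_prod l hl, map_zpow, L_zz_eq, TZ_pow]
  show ((0 : ℤ) + t, _) = _
  rw [zero_add]

lemma ev_inj {x y : T} (h : ev x = ev y) : x = y := by
  rw [← ι_ev x, h, ι_ev]

def flipS : Syl → Syl
  | .u1 => .u2
  | .u2 => .u1
  | .dd => .dd

lemma isD_flipS (s : Syl) : (flipS s).isD = s.isD := by cases s <;> rfl

lemma alt_flip_rev {l : List Syl} (h : Alt l) : Alt ((l.map flipS).reverse) := by
  rw [Alt, List.Chain', List.isChain_reverse, List.isChain_map]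
  refine h.imp ?_
  intro a b hab
  show (flipS b).isD ≠ (flipS a).isD
  rw [isD_flipS, isD_flipS]
  exact hab.symm

def tinv (x : T) : T :=
  (-x.1 - (x.2.1.length : ℤ), ⟨(x.2.1.map flipS).reverse, alt_flip_rev x.2.2⟩)

lemma evS_flip (s : Syl) : (evS s)⁻¹ = zz⁻¹ * evS (flipS s) := by
  cases s
  · show uu⁻¹ = zz⁻¹ * (uu * uu)
    rw [← u_cubed]; group
  · show (uu * uu)⁻¹ = zz⁻¹ * uu
    rw [← u_cubed]; group
  · show dl⁻¹ = zz⁻¹ * dl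
    rw [zz_def]; group

lemma prod_flip : ∀ l : List Syl, ((l.map evS).prod)⁻¹ =
    zz ^ (-(l.length : ℤ)) * ((l.map flipS).reverse.map evS).prod := by
  intro l
  induction l with
  | nil => simp
  | cons s r ih =>
    rw [List.map_cons, List.prod_cons, mul_inv_rev, ih, List.map_cons, List.reverse_cons,
      List.map_append, List.prod_append, evS_flip, List.map_singleton, List.prod_singleton]
    rw [mul_assoc, ← zpow_neg_one zz, swap_zz, ← mul_assoc, ← zpow_add]
    have he : (-(r.length : ℤ)) + -1 = -(((s :: r).length : ℕ) : ℤ) := by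
      push_cast [List.length_cons]; ring
    rw [he]

lemma comm_zpow (g : B₃) (t : ℤ) : g * zz ^ t = zz ^ t * g :=
  (((zz_central g).zpow_left t).eq).symm

lemma ev_tinv (x : T) : ev (tinv x) = (ev x)⁻¹ := by
  rcases x with ⟨t, l, hl⟩
  show evR (-t - (l.length : ℤ), (l.map flipS).reverse) = (evR (t, l))⁻¹
  simp only [evR]
  rw [mul_inv_rev, prod_flip, ← zpow_neg, mul_assoc, comm_zpow, ← mul_assoc, ← zpow_add]
  have he : (-(l.length : ℤ)) + -t = -t - (l.length : ℤ) := by ring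
  rw [he]

lemma ι_inv (g : B₃) : ι g⁻¹ = tinv (ι g) := by
  apply ev_inj
  rw [ev_ι, ev_tinv, ev_ι]

end B3DD

namespace B3DD

open Syl

/-- The positive cone submonoid, generated by `σ₁σ₂` and `σ₂⁻¹`. -/
def Scone : Submonoid B₃ := Submonoid.closure {uu, σ₂⁻¹}

lemma uu_mem : uu ∈ Scone := Submonoid.subset_closure (Or.inl rfl)
lemma b_mem : σ₂⁻¹ ∈ Scone := Submonoid.subset_closure (Or.inr rfl)
lemma zz_mem : zz ∈ Scone := by
  rw [← u_cubed]; exact mul_mem (mul_mem uu_mem uu_mem) uu_mem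

lemma dl_ab : dl = uu * uu * σ₂⁻¹ := by rw [uu, dl]; group
lemma dl_mem : dl ∈ Scone := by rw [dl_ab]; exact mul_mem (mul_mem uu_mem uu_mem) b_mem

lemma u_dl : uu * dl * σ₂ = zz := by
  rw [mul_assoc, dl_s2, ← mul_assoc]
  rfl

lemma u_dl_b : uu * dl = zz * σ₂⁻¹ := by rw [← u_dl]; group

lemma block_u1 (p : B₃) : uu * (dl * p) = zz * (σ₂⁻¹ * p) := by
  rw [← mul_assoc, u_dl_b, mul_assoc]

lemma block_u2 (p : B₃) : uu * uu * (dl * p) = zz * (uu * (σ₂⁻¹ * p)) := by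
  rw [mul_assoc uu uu, block_u1, ← mul_assoc, ← (zz_central uu).eq, mul_assoc]

/-- The raw cone condition: `t + #(d-syllables preceded by a u-syllable) ≥ 0`. -/
def condR : ℤ × List Syl → Prop := fun p => 0 ≤ p.1 + ((p.2.tail.count dd : ℕ) : ℤ)

/-- The cone condition on normal forms. -/
def cond (x : T) : Prop := condR (raw x)

lemma cond_base : cond base := by simp [cond, condR, base, raw]

lemma condR_pU {t : ℤ} {l : List Syl} (hl : Alt l) (h : condR (t, l)) : condR (pU (t, l)) := by
  rcases l with _ | ⟨s, r⟩
  · simpa [pU, condR] using h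
  cases s
  · simpa [pU, condR] using h
  · rcases r with _ | ⟨s', r'⟩
    · simp only [pU, condR] at h ⊢
      simp at h ⊢
      omega
    cases s'
    · exact absurd rfl (List.isChain_cons_cons.1 hl).1
    · exact absurd rfl (List.isChain_cons_cons.1 hl).1
    · simp only [pU, condR] at h ⊢
      simp [List.count_cons] at h ⊢
      omega
  · simp only [pU, condR] at h ⊢
    simp [List.count_cons] at h ⊢
    omega

lemma cond_TU {x : T} (h : cond x) : cond (TU x) := by
  rcases x with ⟨t, l, hl⟩
  exact condR_pU hl h

/-- Pushing `σ₂⁻¹ = z⁻¹ u Δ` on the left preserves the cone condition. -/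
lemma condR_b {t : ℤ} {l : List Syl} (hl : Alt l) (h : condR (t, l)) :
    condR (pUi (pUi (pD (t, l)))) := by
  rcases l with _ | ⟨s, r⟩
  · simpa [pD, pUi, condR] using h
  cases s
  · simp only [pD, pUi, condR] at h ⊢
    simp [List.count_cons] at h ⊢
    omega
  · simp only [pD, pUi, condR] at h ⊢
    simp [List.count_cons] at h ⊢
    omega
  · rcases r with _ | ⟨s', r'⟩
    · simp only [pD, pUi, condR] at h ⊢
      simp at h ⊢
      omega
    cases s'
    · rcases r' with _ | ⟨s'', r''⟩
      · simp only [pD, pUi, condR] at h ⊢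
        simp at h ⊢
        omega
      cases s''
      · exact absurd rfl (List.isChain_cons_cons.1 hl.tail).1
      · exact absurd rfl (List.isChain_cons_cons.1 hl.tail).1
      · simp only [pD, pUi, condR] at h ⊢
        simp [List.count_cons] at h ⊢
        omega
    · rcases r' with _ | ⟨s'', r''⟩
      · simp only [pD, pUi, condR] at h ⊢
        simp at h ⊢
        omega
      cases s''
      · exact absurd rfl (List.isChain_cons_cons.1 hl.tail).1
      · exact absurd rfl (List.isChain_cons_cons.1 hl.tail).1
      · simp only [pD, pUi, condR] at h ⊢
        simp [List.count_cons] at h ⊢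
        omega
    · exact absurd rfl (List.isChain_cons_cons.1 hl).1

lemma cond_b {x : T} (h : cond x) : cond ((L σ₂⁻¹) x) := by
  have happ : (L σ₂⁻¹) x = TU⁻¹ (TU⁻¹ (TD x)) := by
    rw [map_inv, L_s2, PS2]
    simp [mul_inv_rev, Equiv.Perm.mul_apply]
  rw [happ]
  rcases x with ⟨t, l, hl⟩
  exact condR_b hl h

lemma swap_zzn (g p : B₃) (n : ℕ) : g * (zz ^ n * p) = zz ^ n * (g * p) := by
  rw [← mul_assoc, ← ((zz_central g).pow_left n).eq, mul_assoc]

lemma count_eq_tail {r : List Syl} (h : Alt (dd :: r)) : r.count dd = r.tail.count dd := by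
  rcases r with _ | ⟨a, r'⟩
  · rfl
  cases a
  · simp [List.count_cons]
  · simp [List.count_cons]
  · exact absurd rfl (List.isChain_cons_cons.1 h).1

lemma realize : ∀ (n : ℕ) (l : List Syl), l.length ≤ n → Alt l →
    ∃ s ∈ Scone, (l.map evS).prod = zz ^ (l.tail.count dd) * s := by
  intro n
  induction n with
  | zero =>
    intro l hlen _
    rw [List.length_eq_zero_iff.1 (Nat.le_zero.1 hlen)]
    exact ⟨1, one_mem _, by simp⟩
  | succ n ih =>
    intro l hlen hl
    rcases l with _ | ⟨s0, r⟩
    · exact ⟨1, one_mem _, by simp⟩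
    cases s0
    · rcases r with _ | ⟨s1, r'⟩
      · exact ⟨uu, uu_mem, by simp [evS]⟩
      cases s1
      · exact absurd rfl (List.isChain_cons_cons.1 hl).1
      · exact absurd rfl (List.isChain_cons_cons.1 hl).1
      · obtain ⟨s, hs, hp⟩ := ih r' (by simp [List.length_cons] at hlen; omega) hl.tail.tail
        refine ⟨σ₂⁻¹ * s, mul_mem b_mem hs, ?_⟩
        rw [← count_eq_tail hl.tail] at hp
        rw [List.map_cons, List.map_cons, List.prod_cons, List.prod_cons, List.tail_cons,
          List.count_cons_self, hp]
        calc (evS u1 : B₃) * (evS dd * (zz ^ (r'.count dd) * s))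
            = uu * (dl * (zz ^ (r'.count dd) * s)) := rfl
          _ = zz * (σ₂⁻¹ * (zz ^ (r'.count dd) * s)) := block_u1 _
          _ = zz * (zz ^ (r'.count dd) * (σ₂⁻¹ * s)) := by rw [swap_zzn]
          _ = zz ^ (r'.count dd + 1) * (σ₂⁻¹ * s) := by rw [← mul_assoc, ← pow_succ']
    · rcases r with _ | ⟨s1, r'⟩
      · exact ⟨uu * uu, mul_mem uu_mem uu_mem, by simp [evS]⟩
      cases s1
      · exact absurd rfl (List.isChain_cons_cons.1 hl).1
      · exact absurd rfl (List.isChain_cons_cons.1 hl).1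
      · obtain ⟨s, hs, hp⟩ := ih r' (by simp [List.length_cons] at hlen; omega) hl.tail.tail
        refine ⟨uu * (σ₂⁻¹ * s), mul_mem uu_mem (mul_mem b_mem hs), ?_⟩
        rw [← count_eq_tail hl.tail] at hp
        rw [List.map_cons, List.map_cons, List.prod_cons, List.prod_cons, List.tail_cons,
          List.count_cons_self, hp]
        calc (evS u2 : B₃) * (evS dd * (zz ^ (r'.count dd) * s))
            = uu * uu * (dl * (zz ^ (r'.count dd) * s)) := rfl
          _ = zz * (uu * (σ₂⁻¹ * (zz ^ (r'.count dd) * s))) := block_u2 _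
          _ = zz * (uu * (zz ^ (r'.count dd) * (σ₂⁻¹ * s))) := by rw [swap_zzn σ₂⁻¹]
          _ = zz * (zz ^ (r'.count dd) * (uu * (σ₂⁻¹ * s))) := by rw [swap_zzn uu]
          _ = zz ^ (r'.count dd + 1) * (uu * (σ₂⁻¹ * s)) := by rw [← mul_assoc, ← pow_succ']
    · obtain ⟨s, hs, hp⟩ := ih r (by simp [List.length_cons] at hlen; omega) hl.tail
      refine ⟨dl * s, mul_mem dl_mem hs, ?_⟩
      rw [← count_eq_tail hl] at hp
      rw [List.map_cons, List.prod_cons, List.tail_cons, hp]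
      calc (evS dd : B₃) * (zz ^ (r.count dd) * s)
          = zz ^ (r.count dd) * (dl * s) := swap_zzn _ _ _

lemma memS_of_cond {g : B₃} (h : cond (ι g)) : g ∈ Scone := by
  have hev := ev_ι g
  rcases hx : ι g with ⟨t, l, hl⟩
  rw [hx] at hev h
  obtain ⟨s, hs, hp⟩ := realize l.length l le_rfl hl
  rw [show ev (t, ⟨l, hl⟩) = zz ^ t * (l.map evS).prod from rfl, hp] at hev
  set c : ℕ := l.tail.count dd with hc
  have hcond : 0 ≤ t + (c : ℤ) := h
  have hzz : zz ^ t * zz ^ c = zz ^ ((t + c).toNat : ℕ) := by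
    rw [← zpow_natCast zz c, ← zpow_add, ← zpow_natCast zz ((t + c).toNat),
      Int.toNat_of_nonneg hcond]
  rw [← mul_assoc, hzz] at hev
  rw [← hev]
  exact mul_mem (pow_mem zz_mem _) hs

end B3DD

namespace B3DD

open Syl

lemma ι_one : ι 1 = base := by rw [ι, map_one]; rfl

lemma Lb_apply (x : T) : (L σ₂⁻¹) x = TU⁻¹ (TU⁻¹ (TD x)) := by
  rw [map_inv, L_s2, PS2]
  simp [mul_inv_rev, Equiv.Perm.mul_apply]

lemma cond_of_memS {g : B₃} (h : g ∈ Scone) : cond (ι g) := by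
  obtain ⟨lst, hall, hprod⟩ := Submonoid.exists_list_of_mem_closure h
  rw [← hprod]
  clear hprod h
  induction lst with
  | nil =>
    simp only [List.prod_nil]
    rw [ι_one]; exact cond_base
  | cons y rest ih =>
    have hy := hall y (by simp)
    have hrest : cond (ι rest.prod) := ih (fun z hz => hall z (by simp [hz]))
    rw [List.prod_cons, ι_mul]
    rcases hy with rfl | rfl
    · rw [L_u]; exact cond_TU hrest
    · exact cond_b hrest

def hD : Option Syl → ℤ := fun o => if o = some dd then 1 else 0

lemma hD_nonneg (o : Option Syl) : 0 ≤ hD o := by unfold hD; split <;> omega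
lemma hD_le_one (o : Option Syl) : hD o ≤ 1 := by unfold hD; split <;> omega

lemma alt_len {l : List Syl} (hl : Alt l) (hne : l ≠ []) :
    (l.length : ℤ) + hD l.head? + hD l.getLast? = 2 * (l.count dd : ℤ) + 1 := by
  induction l with
  | nil => exact absurd rfl hne
  | cons a r ih =>
    rcases r with _ | ⟨b, r'⟩
    · cases a <;> simp [hD, List.count_cons]
    · have hab := (List.isChain_cons_cons.1 hl).1
      have hih := ih hl.tail (by simp)
      rw [List.getLast?_cons_cons]
      cases a <;> cases b <;>
        simp [hD, SR, Syl.isD, List.count_cons] at hab hih ⊢ <;>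
        push_cast at hih ⊢ <;> omega

lemma count_flip (l : List Syl) : (l.map flipS).count dd = l.count dd := by
  induction l with
  | nil => rfl
  | cons s r ih => cases s <;> simp [flipS, List.count_cons, ih]

lemma count_tail (r : List Syl) : ((r.count dd : ℕ) : ℤ) = ((r.tail.count dd : ℕ) : ℤ) + hD r.head? := by
  rcases r with _ | ⟨a, r'⟩
  · simp [hD]
  · cases a <;> simp [hD, List.count_cons]

lemma hD_map_flip (o : Option Syl) : hD (Option.map flipS o) = hD o := by
  rcases o with _ | s
  · rfl
  · cases s <;> simp [hD, flipS]

lemma total (g : B₃) : g ∈ Scone ∨ g⁻¹ ∈ Scone := by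
  by_cases hc : cond (ι g)
  · exact Or.inl (memS_of_cond hc)
  right
  apply memS_of_cond
  rw [ι_inv]
  rcases hx : ι g with ⟨t, l, hl⟩
  rw [hx] at hc
  show condR (-t - (l.length : ℤ), (l.map flipS).reverse)
  rcases eq_or_ne l [] with rfl | hnil
  · simp only [cond, condR, raw] at hc ⊢
    simp at hc ⊢
    omega
  · have hlen := alt_len hl hnil
    have h1 := count_tail l
    have h2 := count_tail ((l.map flipS).reverse)
    have h3 : ((l.map flipS).reverse).head? = Option.map flipS l.getLast? := by
      rw [← List.map_reverse, List.head?_map, List.head?_reverse]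
    have h4 : ((l.map flipS).reverse).count dd = l.count dd := by
      rw [List.count_reverse, count_flip]
    rw [h3, hD_map_flip, h4] at h2
    simp only [cond, condR, raw] at hc ⊢
    have h5 := hD_nonneg l.head?
    have h6 := hD_le_one l.head?
    have h7 := hD_nonneg l.getLast?
    have h8 := hD_le_one l.getLast?
    omega

lemma antisym {g : B₃} (h1 : g ∈ Scone) (h2 : g⁻¹ ∈ Scone) : g = 1 := by
  have c1 := cond_of_memS h1
  have c2 := cond_of_memS h2
  rw [ι_inv] at c2
  rcases hx : ι g with ⟨t, l, hl⟩
  rw [hx] at c1 c2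
  have hg : g = ev (t, ⟨l, hl⟩) := by rw [← hx, ev_ι]
  have c2' : condR (-t - (l.length : ℤ), (l.map flipS).reverse) := c2
  rcases eq_or_ne l [] with rfl | hnil
  · have ht : t = 0 := by
      simp only [cond, condR, raw] at c1 c2'
      simp at c1 c2'
      omega
    rw [ht] at hg
    rw [hg]
    show zz ^ (0 : ℤ) * (([] : List Syl).map evS).prod = 1
    simp
  · exfalso
    have hlen := alt_len hl hnil
    have h1' := count_tail l
    have h2' := count_tail ((l.map flipS).reverse)
    have h3 : ((l.map flipS).reverse).head? = Option.map flipS l.getLast? := by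
      rw [← List.map_reverse, List.head?_map, List.head?_reverse]
    have h4 : ((l.map flipS).reverse).count dd = l.count dd := by
      rw [List.count_reverse, count_flip]
    rw [h3, hD_map_flip, h4] at h2'
    simp only [cond, condR, raw] at c1 c2'
    have h5 := hD_nonneg l.head?
    have h6 := hD_le_one l.head?
    have h7 := hD_nonneg l.getLast?
    have h8 := hD_le_one l.getLast?
    omega

lemma uu_ne_one : uu ≠ 1 := by
  intro h
  have h1 : TU base = base := by
    calc TU base = ι uu := by rw [ι, L_u]
    _ = ι 1 := by rw [h]
    _ = base := ι_one
  have h2 : ([u1] : List Syl) = ([] : List Syl) := congrArg (fun y : T => y.2.1) h1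
  exact List.cons_ne_nil _ _ h2

lemma b_ne_one : σ₂⁻¹ ≠ (1 : B₃) := by
  intro h
  have h1 : TU⁻¹ (TU⁻¹ (TD base)) = base := by
    calc TU⁻¹ (TU⁻¹ (TD base)) = (L σ₂⁻¹) base := (Lb_apply base).symm
    _ = ι σ₂⁻¹ := rfl
    _ = ι 1 := by rw [h]
    _ = base := ι_one
  have h2 : ([u1, dd] : List Syl) = ([] : List Syl) := congrArg (fun y : T => y.2.1) h1
  exact List.cons_ne_nil _ _ h2

end B3DD

/-- (Dubrovina–Dubrovin) There is exactly one left order on `B₃` making both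
`σ₁σ₂` and `σ₂⁻¹` positive. -/
theorem stmt_16 : ∃! r : B₃ → B₃ → Prop,
    IsLeftOrder r ∧ r 1 (σ₁ * σ₂) ∧ r 1 σ₂⁻¹ := by
  classical
  set r₀ : B₃ → B₃ → Prop := fun f g => f⁻¹ * g ∈ B3DD.Scone ∧ f ≠ g with hr₀
  have htrans : ∀ a b c, r₀ a b → r₀ b c → r₀ a c := by
    rintro a b c ⟨m1, ne1⟩ ⟨m2, ne2⟩
    refine ⟨by rw [show a⁻¹ * c = (a⁻¹ * b) * (b⁻¹ * c) by group]; exact mul_mem m1 m2, ?_⟩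
    rintro rfl
    have hinv : (a⁻¹ * b)⁻¹ ∈ B3DD.Scone := by rwa [mul_inv_rev, inv_inv]
    exact ne1 (inv_mul_eq_one.1 (B3DD.antisym m1 hinv))
  have hirr : ∀ a, ¬r₀ a a := fun a h => h.2 rfl
  have htri : ∀ a b, r₀ a b ∨ a = b ∨ r₀ b a := by
    intro a b
    by_cases hab : a = b
    · exact Or.inr (Or.inl hab)
    rcases B3DD.total (a⁻¹ * b) with hm | hm
    · exact Or.inl ⟨hm, hab⟩
    · refine Or.inr (Or.inr ⟨?_, Ne.symm hab⟩)
      rwa [mul_inv_rev, inv_inv] at hm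
  have hlinv : ∀ h f g : B₃, r₀ f g → r₀ (h * f) (h * g) := by
    rintro h f g ⟨m, ne⟩
    exact ⟨by rwa [show (h * f)⁻¹ * (h * g) = f⁻¹ * g by group],
      fun e => ne (mul_left_cancel e)⟩
  have hpa : r₀ 1 (σ₁ * σ₂) :=
    ⟨by simpa [B3DD.uu] using B3DD.uu_mem, fun e => B3DD.uu_ne_one e.symm⟩
  have hpb : r₀ 1 σ₂⁻¹ :=
    ⟨by simpa using B3DD.b_mem, fun e => B3DD.b_ne_one e.symm⟩
  refine ⟨r₀, ⟨⟨?_, hlinv⟩, hpa, hpb⟩, ?_⟩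
  · exact { toTrichotomous := ⟨fun a b hab hba => by rcases htri a b with h | h | h <;> tauto⟩,
            toIsStrictOrder := { toIrrefl := ⟨hirr⟩, toIsTrans := ⟨htrans⟩ } }
  · rintro r ⟨⟨hsto, hinv⟩, h1, h2⟩
    haveI := hsto
    have hirr' : ∀ a : B₃, ¬r a a := fun a => Std.Irrefl.irrefl a
    have htr' : ∀ {a b c : B₃}, r a b → r b c → r a c :=
      fun hab hbc => IsTrans.trans _ _ _ hab hbc
    have posS : ∀ s ∈ B3DD.Scone, s = 1 ∨ r 1 s := by
      intro s hs
      induction hs using Submonoid.closure_induction with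
      | mem x hx =>
        rcases hx with rfl | rfl
        · exact Or.inr h1
        · exact Or.inr h2
      | one => exact Or.inl rfl
      | mul x y hx hy ihx ihy =>
        rcases ihx with rfl | hx1
        · rwa [one_mul]
        rcases ihy with rfl | hy1
        · rw [mul_one]; exact Or.inr hx1
        · refine Or.inr (htr' hx1 ?_)
          have := hinv x 1 y hy1
          rwa [mul_one] at this
    have hposiff : ∀ w : B₃, w ≠ 1 → (r 1 w ↔ w ∈ B3DD.Scone) := by
      intro w hw
      constructor
      · intro hrw
        rcases B3DD.total w with h | h
        · exact h
        · exfalso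
          rcases posS _ h with e | hr1
          · exact (inv_ne_one.2 hw) e
          · have hw1 : r w (w * w⁻¹) := by
              have := hinv w 1 w⁻¹ hr1
              rwa [mul_one] at this
            rw [mul_inv_cancel] at hw1
            exact hirr' 1 (htr' hrw hw1)
      · intro hmem
        rcases posS _ hmem with e | hr1
        · exact absurd e hw
        · exact hr1
    funext f g
    apply propext
    constructor
    · intro hr
      have hne : f ≠ g := by rintro rfl; exact hirr' f hr
      have h10 : r 1 (f⁻¹ * g) := by
        have := hinv f⁻¹ f g hr
        rwa [inv_mul_cancel] at this
      have hne1 : f⁻¹ * g ≠ 1 := fun e => hne (inv_mul_eq_one.1 e)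
      exact ⟨(hposiff _ hne1).1 h10, hne⟩
    · rintro ⟨hmem, hne⟩
      have hne1 : f⁻¹ * g ≠ 1 := fun e => hne (inv_mul_eq_one.1 e)
      have h10 : r 1 (f⁻¹ * g) := (hposiff _ hne1).2 hmem
      have := hinv f 1 (f⁻¹ * g) h10
      rwa [mul_one, mul_inv_cancel_left] at this
end

section
/- For every n ≥ 5, the braid group B_n admits no Conradian left-invariant total order. -/
/-- The braid relations on `m` generators `σ₀, …, σ_{m-1}` (presenting the braid
group `B_{m+1}`): `σᵢσⱼσᵢ = σⱼσᵢσⱼ` when `j = i+1`, and `σᵢσⱼ = σⱼσᵢ` when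
`|i - j| ≥ 2`. -/
def braidRels (m : ℕ) : Set (FreeGroup (Fin m)) :=
  { x | (∃ i j : Fin m, (i : ℕ) + 1 = (j : ℕ) ∧
          x = FreeGroup.of i * FreeGroup.of j * FreeGroup.of i *
              (FreeGroup.of j * FreeGroup.of i * FreeGroup.of j)⁻¹) ∨
        (∃ i j : Fin m, (i : ℕ) + 2 ≤ (j : ℕ) ∧
          x = FreeGroup.of i * FreeGroup.of j * (FreeGroup.of j * FreeGroup.of i)⁻¹) }

/-- The braid group `Bₙ` on `n - 1` generators. -/
abbrev BraidGroup (n : ℕ) : Type := PresentedGroup (braidRels (n - 1))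

/-- A left order is Conradian if for all positive `f, g` there is `k : ℕ`
with `g ≺ f·gᵏ`. -/
def IsConradian {G : Type*} [Group G] (r : G → G → Prop) : Prop :=
  ∀ f g : G, r 1 f → r 1 g → ∃ k : ℕ, r g (f * g ^ k)

namespace ConradProof

variable {G : Type*} [Group G] {r : G → G → Prop}

section Basic
variable (hLO : IsLeftOrder r)
include hLO

theorem ltr {a b c : G} (h1 : r a b) (h2 : r b c) : r a c := by
  haveI := hLO.1; exact _root_.trans_of r h1 h2

theorem lirr (a : G) : ¬ r a a := by
  haveI := hLO.1; exact _root_.irrefl_of r a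

theorem ltot {a b : G} (h : a ≠ b) : r a b ∨ r b a := by
  haveI := hLO.1
  rcases trichotomous_of r a b with h1 | h1 | h1
  · exact Or.inl h1
  · exact absurd h1 h
  · exact Or.inr h1

theorem lasym {a b : G} (h1 : r a b) (h2 : r b a) : False :=
  lirr hLO a (ltr hLO h1 h2)

theorem lne {a b : G} (h1 : r a b) : a ≠ b := by
  rintro rfl; exact lirr hLO a h1

theorem lmul (c : G) {a b : G} (h : r a b) : r (c * a) (c * b) := hLO.2 c a b h

theorem lmul_cancel {c a b : G} (h : r (c * a) (c * b)) : r a b := by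
  have := lmul hLO c⁻¹ h
  simpa [inv_mul_cancel_left] using this

theorem pos_inv {a : G} (h : r 1 a) : r a⁻¹ 1 := by
  have := lmul hLO a⁻¹ h
  simpa using this

theorem neg_inv {a : G} (h : r a 1) : r 1 a⁻¹ := by
  have := lmul hLO a⁻¹ h
  simpa using this

theorem inv_pos' {a : G} (h : r a⁻¹ 1) : r 1 a := by
  have := neg_inv hLO h; simpa using this

theorem inv_neg' {a : G} (h : r 1 a⁻¹) : r a 1 := by
  have := pos_inv hLO h; simpa using this

theorem pow_pos' {a : G} (h : r 1 a) : ∀ n : ℕ, r 1 (a ^ (n + 1)) := by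
  intro n
  induction n with
  | zero => simpa using h
  | succ k ih =>
      have h2 : r (a ^ (k+1)) (a ^ (k+1) * a) := by
        have := lmul hLO (a ^ (k+1)) h; simpa using this
      have : r 1 (a ^ (k+1) * a) := ltr hLO ih h2
      simpa [pow_succ] using this

theorem pow_lt_pow {a : G} (h : r 1 a) {k l : ℕ} (hkl : k < l) : r (a ^ k) (a ^ l) := by
  have h1 : r 1 (a ^ (l - k - 1 + 1)) := pow_pos' hLO h _
  have h2 := lmul hLO (a ^ k) h1
  have he : a ^ k * a ^ (l - k - 1 + 1) = a ^ l := by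
    rw [← pow_add]; congr 1; omega
  rw [he] at h2
  simpa using h2

end Basic

section C2
variable (hLO : IsLeftOrder r) (hC : IsConradian r)
include hLO hC

/-- The key strengthening of the Conradian property: `g ≺ f g²`. -/
theorem conrad_two {f g : G} (hf : r 1 f) (hg : r 1 g) : r g (f * g ^ 2) := by
  by_contra hcon
  have hfg : r 1 (f * g) := by
    have h1 : r f (f * g) := by have := lmul hLO f hg; simpa using this
    exact ltr hLO hf h1
  obtain ⟨k, hk⟩ := hC f (f * g) hf hfg
  have hx : r g ((f * g) ^ k) := by
    have := lmul hLO f⁻¹ hk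
    simpa [mul_assoc] using this
  have hkpos : k ≠ 0 := by
    rintro rfl
    simp at hx
    exact lasym hLO hg hx
  have hle : r (f * g ^ 2) g ∨ f * g ^ 2 = g := by
    rcases eq_or_ne (f * g ^ 2) g with h | h
    · exact Or.inr h
    · rcases ltot hLO h with h1 | h1
      · exact Or.inl h1
      · exact absurd h1 hcon
  have claim : ∀ j : ℕ, r ((f*g) ^ (j+1) * g) g ∨ ((f*g) ^ (j+1) * g) = g := by
    intro j
    induction j with
    | zero =>
        have he : (f*g) ^ 1 * g = f * g ^ 2 := by rw [pow_one, pow_two, mul_assoc]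
        rw [he]; exact hle
    | succ j ih =>
        have he : (f*g) ^ (j+2) * g = (f*g) * ((f*g) ^ (j+1) * g) := by
          rw [← mul_assoc, ← pow_succ']
        have he2 : (f*g) * g = f * g ^ 2 := by rw [pow_two, mul_assoc]
        rcases ih with h1 | h1
        · have := lmul hLO (f*g) h1
          rw [← he, he2] at this
          rcases hle with h2 | h2
          · exact Or.inl (ltr hLO this h2)
          · rw [h2] at this; exact Or.inl this
        · rw [he, h1, he2]; exact hle
  obtain ⟨j, rfl⟩ : ∃ j, j + 1 = k := ⟨k - 1, by omega⟩
  set x := (f*g) ^ (j+1) with hxdef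
  -- u = g⁻¹ * x * g ⪯ 1
  have hu : r (g⁻¹ * (x * g)) 1 ∨ g⁻¹ * (x * g) = 1 := by
    rcases claim j with h1 | h1
    · have := lmul hLO g⁻¹ h1; simpa using Or.inl this
    · right; rw [h1]; simp
  -- v = g⁻¹ * x⁻¹ * g ≺ 1
  have hv1 : r (x⁻¹ * g) 1 := by
    have := lmul hLO x⁻¹ hx; simpa using this
  have hv2 : r (g⁻¹ * (x⁻¹ * g)) g⁻¹ := by
    have := lmul hLO g⁻¹ hv1; simpa using this
  have hv3 : r (g⁻¹ * (x⁻¹ * g)) 1 := ltr hLO hv2 (pos_inv hLO hg)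
  have hv4 : r 1 (g⁻¹ * (x * g)) := by
    have := neg_inv hLO hv3
    have he : (g⁻¹ * (x⁻¹ * g))⁻¹ = g⁻¹ * (x * g) := by group
    rwa [he] at this
  rcases hu with h1 | h1
  · exact lasym hLO hv4 h1
  · rw [h1] at hv4; exact lirr hLO 1 hv4

/-- `t ≺ 1`, `1 ≺ p` implies `t p ≺ p²`. -/
theorem c2_form {t p : G} (ht : r t 1) (hp : r 1 p) : r (t * p) (p ^ 2) := by
  have h1 : r p (t⁻¹ * p ^ 2) := conrad_two hLO hC (neg_inv hLO ht) hp
  have := lmul hLO t h1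
  simpa [mul_assoc] using this

end C2



section Vmach
variable (hLO : IsLeftOrder r) (hC : IsConradian r)

include hLO in
theorem bound_mono (hd : r 1 d) {x : G} {k l : ℕ} (h : r x (d ^ k)) (hkl : k ≤ l) :
    r x (d ^ l) := by
  rcases eq_or_lt_of_le hkl with rfl | hlt
  · exact h
  · exact ltr hLO h (pow_lt_pow hLO hd hlt)

include hLO hC

theorem lemR {d u : G} (hd : r 1 d) (hu : r u 1 ∨ u = 1) : ∃ m : ℕ, r (u * d) (d ^ m) := by
  rcases hu with hu | rfl
  · obtain ⟨k, hk⟩ := hC u⁻¹ d (neg_inv hLO hu) hd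
    refine ⟨k, ?_⟩
    have := lmul hLO u hk
    simpa [mul_assoc] using this
  · refine ⟨2, ?_⟩
    have := pow_lt_pow hLO hd (k := 1) (l := 2) (by norm_num)
    simpa [pow_one] using this

theorem lemR2 {d x : G} (hd : r 1 d) {k : ℕ} (hx : r x (d ^ k)) : ∃ K : ℕ, r (x * d) (d ^ K) := by
  have hu : r ((d ^ k)⁻¹ * x) 1 := by
    have := lmul hLO (d ^ k)⁻¹ hx; simpa using this
  obtain ⟨m, hm⟩ := lemR hLO hC hd (Or.inl hu)
  refine ⟨k + m, ?_⟩
  have h2 := lmul hLO (d ^ k) hm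
  have he : d ^ k * ((d ^ k)⁻¹ * x * d) = x * d := by group
  rw [he, ← pow_add] at h2
  exact h2

theorem lemR3 {d x : G} (hd : r 1 d) {k : ℕ} (hx : r x (d ^ k)) (j : ℕ) :
    ∃ K : ℕ, r (x * d ^ j) (d ^ K) := by
  induction j with
  | zero => exact ⟨k, by simpa using hx⟩
  | succ j ih =>
      obtain ⟨K, hK⟩ := ih
      obtain ⟨K', hK'⟩ := lemR2 hLO hC hd hK
      refine ⟨K', ?_⟩
      have he : x * d ^ (j+1) = x * d ^ j * d := by rw [pow_succ, mul_assoc]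
      rwa [he]

theorem lemR4 {d x y : G} (hd : r 1 d) {a b : ℕ} (hx : r x (d ^ a)) (hy : r y (d ^ b)) :
    ∃ K : ℕ, r (x * y) (d ^ K) := by
  obtain ⟨K, hK⟩ := lemR3 hLO hC hd hx b
  exact ⟨K, ltr hLO (lmul hLO x hy) hK⟩

end Vmach

/-- Elements bounded (together with their inverse) by powers of `d`. -/
def VS (r : G → G → Prop) (d x : G) : Prop := ∃ n : ℕ, r x (d ^ n) ∧ r x⁻¹ (d ^ n)

section VSsec
variable (hLO : IsLeftOrder r) (hC : IsConradian r)

theorem VS_one (hd : r 1 d) : VS r d 1 :=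
  ⟨1, by simpa [pow_one] using hd, by simpa [pow_one] using hd⟩

theorem VS_inv (h : VS r d x) : VS r d x⁻¹ := by
  obtain ⟨n, h1, h2⟩ := h
  exact ⟨n, h2, by simpa using h1⟩

include hLO hC in
theorem VS_mul (hd : r 1 d) (hx : VS r d x) (hy : VS r d y) : VS r d (x * y) := by
  obtain ⟨n, hx1, hx2⟩ := hx
  obtain ⟨m, hy1, hy2⟩ := hy
  obtain ⟨K1, hK1⟩ := lemR4 hLO hC hd hx1 hy1
  obtain ⟨K2, hK2⟩ := lemR4 hLO hC hd hy2 hx2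
  refine ⟨max K1 K2, bound_mono hLO hd hK1 (le_max_left _ _), ?_⟩
  have he : (x * y)⁻¹ = y⁻¹ * x⁻¹ := by group
  rw [he]
  exact bound_mono hLO hd hK2 (le_max_right _ _)

include hLO in
theorem VS_d (hd : r 1 d) : VS r d d := by
  refine ⟨2, ?_, ?_⟩
  · have := pow_lt_pow hLO hd (k := 1) (l := 2) (by norm_num)
    simpa [pow_one] using this
  · exact ltr hLO (pos_inv hLO hd) (by simpa using pow_pos' hLO hd 1)

include hLO hC in
theorem VS_convex (hd : r 1 d) {x y z : G} (hx : VS r d x) (hz : VS r d z)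
    (hxy : r x y ∨ x = y) (hyz : r y z ∨ y = z) : VS r d y := by
  rcases hxy with hxy | rfl
  · obtain ⟨n, hx1, hx2⟩ := hx
    obtain ⟨m, hz1, hz2⟩ := hz
    have hupper : r y (d ^ m) := by
      rcases hyz with hyz | rfl
      · exact ltr hLO hyz hz1
      · exact hz1
    have hw : r (y⁻¹ * x) 1 := by
      have := lmul hLO y⁻¹ hxy; simpa using this
    have hw0 : r (y⁻¹ * x) (d ^ 0) := by simpa using hw
    obtain ⟨K, hK⟩ := lemR3 hLO hC hd hw0 n
    have h1 : r y⁻¹ (y⁻¹ * x * d ^ n) := by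
      have := lmul hLO (y⁻¹ * x) hx2
      simpa [mul_assoc] using this
    have hinv : r y⁻¹ (d ^ K) := ltr hLO h1 hK
    exact ⟨max m K, bound_mono hLO hd hupper (le_max_left _ _),
      bound_mono hLO hd hinv (le_max_right _ _)⟩
  · exact hx

end VSsec

/-- The subgroup of elements bounded by powers of `d`. -/
def Vsub (hLO : IsLeftOrder r) (hC : IsConradian r) (hd : r 1 d) : Subgroup G where
  carrier := {x | VS r d x}
  one_mem' := VS_one hd
  inv_mem' := fun h => VS_inv h
  mul_mem' := fun h1 h2 => VS_mul hLO hC hd h1 h2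

/-- Convexity of a subgroup w.r.t. a left order. -/
def IsConvex (r : G → G → Prop) (C : Subgroup G) : Prop :=
  ∀ x ∈ C, ∀ z ∈ C, ∀ y, (r x y ∨ x = y) → (r y z ∨ y = z) → y ∈ C

theorem convex_bot (hLO : IsLeftOrder r) : IsConvex r (⊥ : Subgroup G) := by
  intro x hx z hz y hxy hyz
  simp only [Subgroup.mem_bot] at *
  subst hx; subst hz
  rcases hxy with h1 | h1
  · rcases hyz with h2 | h2
    · exact absurd h2 (fun h2 => lasym hLO h1 h2)
    · exact h2
  · exact h1.symm

theorem convex_Vsub (hLO : IsLeftOrder r) (hC : IsConradian r) (hd : r 1 d) :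
    IsConvex r (Vsub hLO hC hd) := by
  intro x hx z hz y hxy hyz
  exact VS_convex hLO hC hd hx hz hxy hyz

theorem convex_chain (hLO : IsLeftOrder r) {C D : Subgroup G}
    (hc : IsConvex r C) (hd : IsConvex r D) : C ≤ D ∨ D ≤ C := by
  by_contra hcon
  push_neg at hcon
  obtain ⟨c, hcC, hcD⟩ := SetLike.not_le_iff_exists.1 hcon.1
  obtain ⟨d, hdD, hdC⟩ := SetLike.not_le_iff_exists.1 hcon.2
  -- normalize to positive elements
  have hcne : c ≠ 1 := by rintro rfl; exact hcD (one_mem D)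
  have hdne : d ≠ 1 := by rintro rfl; exact hdC (one_mem C)
  obtain ⟨c', hc'C, hc'D, hc'pos⟩ : ∃ c', c' ∈ C ∧ c' ∉ D ∧ r 1 c' := by
    rcases ltot hLO hcne.symm with h | h
    · exact ⟨c, hcC, hcD, h⟩
    · exact ⟨c⁻¹, inv_mem hcC, fun hmem => hcD (by simpa using inv_mem hmem), neg_inv hLO h⟩
  obtain ⟨d', hd'D, hd'C, hd'pos⟩ : ∃ d', d' ∈ D ∧ d' ∉ C ∧ r 1 d' := by
    rcases ltot hLO hdne.symm with h | h
    · exact ⟨d, hdD, hdC, h⟩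
    · exact ⟨d⁻¹, inv_mem hdD, fun hmem => hdC (by simpa using inv_mem hmem), neg_inv hLO h⟩
  have hne : c' ≠ d' := by rintro rfl; exact hd'C hc'C
  rcases ltot hLO hne with h | h
  · exact hc'D (hd (1:G) (one_mem D) d' hd'D c' (Or.inl hc'pos) (Or.inl h))
  · exact hd'C (hc (1:G) (one_mem C) c' hc'C d' (Or.inl hd'pos) (Or.inl h))

section Cmax

/-- The union of all proper convex subgroups. -/
def Cmax (hLO : IsLeftOrder r) (hbot : (⊥ : Subgroup G) ≠ ⊤) : Subgroup G where
  carrier := {g | ∃ C : Subgroup G, IsConvex r C ∧ C ≠ ⊤ ∧ g ∈ C}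
  one_mem' := ⟨⊥, convex_bot hLO, hbot, one_mem ⊥⟩
  inv_mem' := by
    rintro x ⟨C, h1, h2, h3⟩
    exact ⟨C, h1, h2, inv_mem h3⟩
  mul_mem' := by
    rintro x y ⟨C, h1, h2, h3⟩ ⟨D, h4, h5, h6⟩
    rcases convex_chain hLO h1 h4 with h | h
    · exact ⟨D, h4, h5, mul_mem (h h3) h6⟩
    · exact ⟨C, h1, h2, mul_mem h3 (h h6)⟩

variable (hLO : IsLeftOrder r) (hbot : (⊥ : Subgroup G) ≠ ⊤)

theorem convex_Cmax : IsConvex r (Cmax hLO hbot) := by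
  rintro x ⟨C, h1, h2, h3⟩ z ⟨D, h4, h5, h6⟩ y hxy hyz
  rcases convex_chain hLO h1 h4 with h | h
  · exact ⟨D, h4, h5, h4 x (h h3) z h6 y hxy hyz⟩
  · exact ⟨C, h1, h2, h1 x h3 z (h h6) y hxy hyz⟩

theorem Cmax_ne_top {S : Set G} (hfin : S.Finite) (hgen : Subgroup.closure S = ⊤) :
    Cmax hLO hbot ≠ ⊤ := by
  intro htop
  have hsub : ∃ C : Subgroup G, IsConvex r C ∧ C ≠ ⊤ ∧ S ⊆ C := by
    refine Set.Finite.induction_on (motive := fun s _ => ∃ C : Subgroup G, IsConvex r C ∧ C ≠ ⊤ ∧ s ⊆ C)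
      S hfin ⟨⊥, convex_bot hLO, hbot, by simp⟩ ?_
    rintro a s _ _ ⟨C, h1, h2, h3⟩
    have ha : a ∈ Cmax hLO hbot := htop ▸ Subgroup.mem_top a
    obtain ⟨D, h4, h5, h6⟩ := ha
    rcases convex_chain hLO h1 h4 with h | h
    · exact ⟨D, h4, h5, Set.insert_subset h6 (fun x hx => h (h3 hx))⟩
    · exact ⟨C, h1, h2, Set.insert_subset (h h6) h3⟩
  obtain ⟨C, h1, h2, h3⟩ := hsub
  exact h2 (top_le_iff.1 (hgen ▸ Subgroup.closure_le C |>.2 h3))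

theorem Cmax_max {V : Subgroup G} (hV : IsConvex r V) (hnle : ¬ V ≤ Cmax hLO hbot) :
    V = ⊤ := by
  by_contra hne
  exact hnle (fun v hv => ⟨V, hV, hne, hv⟩)

-- All elements of a proper convex "core" are below positive elements outside it.
include hLO in
theorem mem_lt_of_not_mem {N : Subgroup G} (hconv : IsConvex r N) {x p : G}
    (hx : x ∈ N) (hp : p ∉ N) (hppos : r 1 p) : r x p := by
  by_contra hcon
  have : p = x ∨ r p x := by
    rcases eq_or_ne p x with h | h
    · exact Or.inl h
    · rcases ltot hLO h with h1 | h1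
      · exact Or.inr h1
      · exact absurd h1 hcon
  rcases this with h | h
  · exact hp (h ▸ hx)
  · exact hp (hconv 1 (one_mem N) x hx p (Or.inl hppos) (Or.inl h))

include hLO in
theorem lt_mem_of_not_mem {N : Subgroup G} (hconv : IsConvex r N) {x p : G}
    (hx : x ∈ N) (hp : p ∉ N) (hpneg : r p 1) : r p x := by
  by_contra hcon
  have : x = p ∨ r x p := by
    rcases eq_or_ne x p with h | h
    · exact Or.inl h
    · rcases ltot hLO h with h1 | h1
      · exact Or.inr h1
      · exact absurd h1 hcon
  rcases this with h | h
  · exact hp (h ▸ hx)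
  · exact hp (hconv x hx 1 (one_mem N) p (Or.inl h) (Or.inl hpneg))

end Cmax

section Normality
variable (hLO : IsLeftOrder r) (hC : IsConradian r) (hbot : (⊥ : Subgroup G) ≠ ⊤)

include hC in
theorem Vtop {h : G} (hh : r 1 h) (hN : h ∉ Cmax hLO hbot) (y : G) :
    ∃ n : ℕ, r y (h ^ n) := by
  have htop : Vsub hLO hC hh = ⊤ := by
    refine Cmax_max hLO hbot (convex_Vsub hLO hC hh) (fun hle => hN ?_)
    exact hle (VS_d hLO hh)
  have hy : y ∈ Vsub hLO hC hh := htop ▸ Subgroup.mem_top y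
  obtain ⟨n, h1, _⟩ := hy
  exact ⟨n, h1⟩

include hLO in
theorem conj_bound_fwd {a p : G} (ha : a ∈ Cmax hLO hbot) (hp : p ∉ Cmax hLO hbot)
    (hppos : r 1 p) : r (p * a * p⁻¹) (p ^ 2) := by
  have h1 : r a p := mem_lt_of_not_mem hLO (convex_Cmax hLO hbot) ha hp hppos
  have h2 : r (a * p⁻¹) a := by
    have := lmul hLO a (pos_inv hLO hppos); simpa using this
  have h3 : r (p * (a * p⁻¹)) (p * a) := lmul hLO p h2
  have h4 : r (p * a) (p * p) := lmul hLO p h1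
  have h5 := ltr hLO h3 h4
  rw [← mul_assoc, ← pow_two] at h5
  exact h5

include hLO hC in
theorem conj_bound_bwd {a p : G} (ha : a ∈ Cmax hLO hbot) (hp : p ∉ Cmax hLO hbot)
    (hppos : r 1 p) : r (p⁻¹ * a * p) (p ^ 2) := by
  have h1 : r a p := mem_lt_of_not_mem hLO (convex_Cmax hLO hbot) ha hp hppos
  have ht : r (p⁻¹ * a) 1 := by
    have := lmul hLO p⁻¹ h1; simpa using this
  exact c2_form hLO hC ht hppos

include hC in
theorem Cmax_normal : (Cmax hLO hbot).Normal := by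
  constructor
  intro c hc g
  by_cases hg : g ∈ Cmax hLO hbot
  · exact mul_mem (mul_mem hg hc) (inv_mem hg)
  have hgne : g ≠ 1 := by rintro rfl; exact hg (one_mem _)
  -- a positive element outside `Cmax`, with uniform bounds on the conjugates
  obtain ⟨p, hpnot, hppos, hbound⟩ :
      ∃ p, p ∉ Cmax hLO hbot ∧ r 1 p ∧
        ∀ b ∈ Cmax hLO hbot, r (g * b * g⁻¹) (p ^ 2) := by
    rcases ltot hLO hgne with h1 | h1
    swap
    · refine ⟨g, hg, h1, fun b hb => conj_bound_fwd hLO hbot hb hg h1⟩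
    · refine ⟨g⁻¹, fun hmem => hg (by simpa using inv_mem hmem), neg_inv hLO h1, ?_⟩
      intro b hb
      have := conj_bound_bwd hLO hC hbot hb
        (fun hmem => hg (by simpa using inv_mem hmem)) (neg_inv hLO h1)
      simpa using this
  by_contra hnot
  have hne1 : g * c * g⁻¹ ≠ 1 := by rintro h; exact hnot (h ▸ one_mem _)
  have hbound' : ∀ (b : G) (_ : b ∈ Cmax hLO hbot) (j : ℕ),
      r ((g * b * g⁻¹) ^ j) (p ^ 2) := by
    intro b hb j
    rw [conj_pow]
    exact hbound _ (pow_mem hb j)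
  rcases ltot hLO (Ne.symm hne1) with h1 | h1
  · obtain ⟨n, hn⟩ := Vtop hLO hC hbot h1 hnot (p ^ 2)
    exact lasym hLO hn (hbound' c hc n)
  · have hinv : (g * c * g⁻¹)⁻¹ = g * c⁻¹ * g⁻¹ := by group
    have h2 : r 1 (g * c⁻¹ * g⁻¹) := by rw [← hinv]; exact neg_inv hLO h1
    have hnot2 : g * c⁻¹ * g⁻¹ ∉ Cmax hLO hbot := by
      intro hmem
      have he : (g * c⁻¹ * g⁻¹)⁻¹ = g * c * g⁻¹ := by group
      exact hnot (he ▸ inv_mem hmem)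
    obtain ⟨n, hn⟩ := Vtop hLO hC hbot h2 hnot2 (p ^ 2)
    exact lasym hLO hn (hbound' c⁻¹ (inv_mem hc) n)

end Normality

section Holder
variable {Q : Type*} [Group Q] {p : Q → Q → Prop}

theorem conj_pos_of_pos (hLO : IsLeftOrder p)
    (parch : ∀ a b : Q, p 1 a → p 1 b → ∃ n : ℕ, p b (a ^ n))
    {a g : Q} (ha : p 1 a) (hg : p 1 g) : p 1 (g * a * g⁻¹) := by
  by_contra hcon
  have hne : g * a * g⁻¹ ≠ 1 := by
    intro h
    have : a = 1 := by
      have := congrArg (fun z => g⁻¹ * z * g) h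
      simpa [mul_assoc] using this
    rw [this] at ha
    exact lirr hLO 1 ha
  have hw : p (g * a * g⁻¹) 1 := by
    rcases ltot hLO hne with h | h
    · exact h
    · exact absurd h hcon
  set w := g * a * g⁻¹ with hwdef
  have hga : p g (w * g) := by
    have h1 : p g (g * a) := by have := lmul hLO g ha; simpa using this
    have he : w * g = g * a := by rw [hwdef]; group
    rwa [← he] at h1
  have h1 : ∀ n : ℕ, p 1 (w ^ n * g) := by
    intro n
    induction n with
    | zero => simpa using hg
    | succ k ih =>
        have h2 : p (w ^ k * g) (w ^ k * (w * g)) := lmul hLO _ hga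
        have he : w ^ k * (w * g) = w ^ (k+1) * g := by
          rw [← mul_assoc, ← pow_succ]
        rw [he] at h2
        exact ltr hLO ih h2
  obtain ⟨n, hn⟩ := parch w⁻¹ g (neg_inv hLO hw) hg
  have h2 : p (w ^ n * g) (w ^ n * (w⁻¹) ^ n) := lmul hLO _ hn
  have he : w ^ n * (w⁻¹) ^ n = 1 := by
    rw [inv_pow]; simp
  rw [he] at h2
  exact lasym hLO (h1 n) h2

theorem conj_pos (hLO : IsLeftOrder p)
    (parch : ∀ a b : Q, p 1 a → p 1 b → ∃ n : ℕ, p b (a ^ n))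
    {a : Q} (ha : p 1 a) (g : Q) : p 1 (g * a * g⁻¹) := by
  rcases eq_or_ne g 1 with rfl | hgne
  · simpa using ha
  by_contra hcon
  have hne : g * a * g⁻¹ ≠ 1 := by
    intro h
    have : a = 1 := by
      have := congrArg (fun z => g⁻¹ * z * g) h
      simpa [mul_assoc] using this
    rw [this] at ha
    exact lirr hLO 1 ha
  have hw : p (g * a * g⁻¹) 1 := by
    rcases ltot hLO hne with h | h
    · exact h
    · exact absurd h hcon
  rcases ltot hLO hgne with hg | hg
  · -- g negative
    have h1 : p 1 (g * a * g⁻¹)⁻¹ := neg_inv hLO hw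
    have h2 := conj_pos_of_pos hLO parch h1 (neg_inv hLO hg)
    have he : g⁻¹ * (g * a * g⁻¹)⁻¹ * g⁻¹⁻¹ = a⁻¹ := by group
    rw [he] at h2
    exact lasym hLO ha (inv_neg' hLO h2)
  · exact hcon (conj_pos_of_pos hLO parch ha hg)

theorem pmulR (hLO : IsLeftOrder p)
    (parch : ∀ a b : Q, p 1 a → p 1 b → ∃ n : ℕ, p b (a ^ n))
    {a b : Q} (c : Q) (h : p a b) : p (a * c) (b * c) := by
  have h1 : p 1 (a⁻¹ * b) := by have := lmul hLO a⁻¹ h; simpa using this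
  have h2 := conj_pos hLO parch h1 c⁻¹
  have h3 := lmul hLO (a * c) h2
  have he : a * c * (c⁻¹ * (a⁻¹ * b) * c⁻¹⁻¹) = b * c := by group
  rw [he] at h3
  simpa using h3

theorem pmul2 (hLO : IsLeftOrder p)
    (parch : ∀ a b : Q, p 1 a → p 1 b → ∃ n : ℕ, p b (a ^ n))
    {a b c d : Q} (h1 : p a b) (h2 : p c d) : p (a * c) (b * d) :=
  ltr hLO (lmul hLO a h2) (pmulR hLO parch d h1)

theorem zpow_pos_of_pos (hLO : IsLeftOrder p) {u : Q} (hu : p 1 u) {d : ℤ} (hd : 1 ≤ d) :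
    p 1 (u ^ d) := by
  obtain ⟨m, hm⟩ : ∃ m : ℕ, d = (m : ℤ) + 1 := ⟨(d - 1).toNat, by omega⟩
  have h1 : p 1 (u ^ (m + 1)) := pow_pos' hLO hu m
  have he : u ^ d = u ^ (m + 1) := by
    rw [hm]; rw [← zpow_natCast u (m+1)]; push_cast; ring_nf
  rwa [he]

theorem zpow_lt (hLO : IsLeftOrder p) {u : Q} (hu : p 1 u) {k l : ℤ} (h : k < l) :
    p (u ^ k) (u ^ l) := by
  have h1 : p 1 (u ^ (l - k)) := zpow_pos_of_pos hLO hu (by omega)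
  have h2 := lmul hLO (u ^ k) h1
  rw [mul_one, ← zpow_add] at h2
  have he : k + (l - k) = l := by ring
  rwa [he] at h2

theorem zpow_lt_rev (hLO : IsLeftOrder p) {u : Q} (hu : p 1 u) {k l : ℤ}
    (h : p (u ^ k) (u ^ l)) : k < l := by
  by_contra hcon
  push_neg at hcon
  rcases eq_or_lt_of_le hcon with rfl | hlt
  · exact lirr hLO _ h
  · exact lasym hLO h (zpow_lt hLO hu hlt)

theorem exists_mfloor (hLO : IsLeftOrder p)
    (parch : ∀ a b : Q, p 1 a → p 1 b → ∃ n : ℕ, p b (a ^ n))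
    {u : Q} (hu : p 1 u) (y : Q) :
    ∃ d : ℤ, (p (u ^ d) y ∨ u ^ d = y) ∧ p y (u ^ (d + 1)) := by
  have hub : ∃ K : ℤ, p y (u ^ K) := by
    rcases eq_or_ne y 1 with rfl | hyne
    · exact ⟨1, by simpa using hu⟩
    rcases ltot hLO hyne with h | h
    · exact ⟨1, ltr hLO h (by simpa using hu)⟩
    · obtain ⟨n, hn⟩ := parch u y hu h
      exact ⟨n, by rwa [← zpow_natCast] at hn⟩
  have hlb : ∃ L : ℤ, p (u ^ L) y ∨ u ^ L = y := by
    rcases eq_or_ne y 1 with rfl | hyne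
    · exact ⟨0, Or.inr (by simp)⟩
    rcases ltot hLO hyne with hpos | hneg
    swap
    · refine ⟨-1, Or.inl ?_⟩
      have h1 : p (u ^ (-1 : ℤ)) 1 := by
        have := pos_inv hLO hu; simpa [zpow_neg] using this
      exact ltr hLO h1 hneg
    · obtain ⟨n, hn⟩ := parch u y⁻¹ hu (neg_inv hLO hpos)
      refine ⟨-(n : ℤ), Or.inl ?_⟩
      have h1 : p (y⁻¹ * y) (u ^ n * y) := pmulR hLO parch y hn
      rw [inv_mul_cancel] at h1
      have h2 := lmul hLO (u ^ (-(n : ℤ))) h1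
      rw [mul_one] at h2
      have he : u ^ (-(n : ℤ)) * (u ^ n * y) = y := by
        rw [← mul_assoc, ← zpow_natCast u n, ← zpow_add]
        simp
      rwa [he] at h2
  obtain ⟨K, hK⟩ := hub
  obtain ⟨L, hL⟩ := hlb
  have hbdd : ∃ b : ℤ, ∀ z : ℤ, (p (u ^ z) y ∨ u ^ z = y) → z ≤ b := by
    refine ⟨K, fun z hz => ?_⟩
    have : p (u ^ z) (u ^ K) := by
      rcases hz with hz | hz
      · exact ltr hLO hz hK
      · rw [hz]; exact hK
    exact le_of_lt (zpow_lt_rev hLO hu this)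
  obtain ⟨d, hd1, hd2⟩ := Int.exists_greatest_of_bdd hbdd ⟨L, hL⟩
  refine ⟨d, hd1, ?_⟩
  have hnot : ¬ (p (u ^ (d+1)) y ∨ u ^ (d+1) = y) := fun h => by
    have := hd2 _ h; omega
  push_neg at hnot
  rcases eq_or_ne y (u ^ (d+1)) with he | hne
  · exact absurd he.symm hnot.2
  rcases ltot hLO hne with h | h
  · exact h
  · exact absurd h hnot.1

open Filter Topology in
theorem holder_hom (hLO : IsLeftOrder p)
    (parch : ∀ a b : Q, p 1 a → p 1 b → ∃ n : ℕ, p b (a ^ n))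
    {u : Q} (hu : p 1 u) :
    ∃ φ : Q → ℝ, (∀ a b, φ (a * b) = φ a + φ b) ∧ φ u = 1 := by
  classical
  -- helper facts about the reflexive closure
  have hLmul : ∀ {a b : Q} (c : Q), (p a b ∨ a = b) → (p (a*c) (b*c) ∨ a*c = b*c) := by
    rintro a b c (h | rfl)
    · exact Or.inl (pmulR hLO parch c h)
    · exact Or.inr rfl
  have hmulL' : ∀ (c : Q) {a b : Q}, (p a b ∨ a = b) → (p (c*a) (c*b) ∨ c*a = c*b) := by
    rintro c a b (h | rfl)
    · exact Or.inl (lmul hLO c h)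
    · exact Or.inr rfl
  have hLtrans : ∀ {a b c : Q}, (p a b ∨ a = b) → (p b c ∨ b = c) → (p a c ∨ a = c) := by
    rintro a b c (h1 | rfl) (h2 | rfl)
    · exact Or.inl (ltr hLO h1 h2)
    · exact Or.inl h1
    · exact Or.inl h2
    · exact Or.inr rfl
  have hLp : ∀ {a b c : Q}, (p a b ∨ a = b) → p b c → p a c := by
    rintro a b c (h1 | rfl) h2
    · exact ltr hLO h1 h2
    · exact h2
  have hpL : ∀ {a b c : Q}, p a b → (p b c ∨ b = c) → p a c := by
    rintro a b c h1 (h2 | rfl)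
    · exact ltr hLO h1 h2
    · exact h1
  have hL2 : ∀ {a b c d : Q}, (p a b ∨ a = b) → (p c d ∨ c = d) →
      (p (a*c) (b*d) ∨ a*c = b*d) :=
    fun h1 h2 => hLtrans (hmulL' _ h2) (hLmul _ h1)
  have hL3 : ∀ {a b c d e f : Q}, (p a b ∨ a = b) → (p c d ∨ c = d) →
      (p e f ∨ e = f) → (p (a*c*e) (b*d*f) ∨ a*c*e = b*d*f) :=
    fun h1 h2 h3 => hL2 (hL2 h1 h2) h3
  have hLpL : ∀ {a b c d e f : Q}, (p a b ∨ a = b) → p c d →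
      (p e f ∨ e = f) → p (a*c*e) (b*d*f) := by
    intro a b c d e f h1 h2 h3
    have s1 : p (a*c) (b*d) := hLp (hLmul c h1) (lmul hLO b h2)
    have s2 : p (a*c*e) (b*d*e) := pmulR hLO parch e s1
    exact hpL s2 (hmulL' (b*d) h3)
  -- the floor function for powers of u
  choose mf hmf1 hmf2 using exists_mfloor hLO parch hu
  have hup : ∀ (y : Q) (d : ℤ), p y (u ^ (d+1)) → mf y ≤ d := by
    intro y d h
    have h2 : p (u ^ (mf y)) (u ^ (d+1)) := hLp (hmf1 y) h
    have := zpow_lt_rev hLO hu h2; omega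
  have hlow : ∀ (y : Q) (d : ℤ), (p (u^d) y ∨ u^d = y) → d ≤ mf y := by
    intro y d h
    have h2 : p (u ^ d) (u ^ (mf y + 1)) := hLp h (hmf2 y)
    have := zpow_lt_rev hLO hu h2; omega
  set M : Q → ℕ → ℤ := fun x n => mf (x ^ n) with hM
  have hMsuper : ∀ (x : Q) (a b : ℕ), M x a + M x b ≤ M x (a + b) := by
    intro x a b
    refine hlow _ _ ?_
    have h3 := hL2 (hmf1 (x ^ a)) (hmf1 (x ^ b))
    rwa [← zpow_add, ← pow_add] at h3
  have hMsub : ∀ (x : Q) (a b : ℕ), M x (a + b) ≤ M x a + M x b + 1 := by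
    intro x a b
    refine hup _ _ ?_
    have h3 := pmul2 hLO parch (hmf2 (x ^ a)) (hmf2 (x ^ b))
    rw [← zpow_add] at h3
    rw [pow_add]
    have he : (M x a + 1) + (M x b + 1) = (M x a + M x b + 1) + 1 := by ring
    rwa [he] at h3
  have hM0 : ∀ x : Q, M x 0 = 0 := by
    intro x
    have h1 : mf (x^0) ≤ 0 := hup _ 0 (by simpa using hu)
    have h2 : (0:ℤ) ≤ mf (x^0) := hlow _ 0 (Or.inr (by simp))
    simp only [hM]; omega
  have hMlin : ∀ (x : Q) (n : ℕ), (n:ℤ) * M x 1 ≤ M x n := by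
    intro x n
    induction n with
    | zero => simp [hM0]
    | succ k ih =>
        have h1 := hMsuper x k 1
        have h2 : ((k:ℤ)+1) * M x 1 = (k:ℤ) * M x 1 + M x 1 := by ring
        push_cast
        linarith [h1, ih, h2]
  have hsubadd : ∀ x : Q, Subadditive (fun n => (M x n : ℝ) + 1) := by
    intro x a b
    show (M x (a+b) : ℝ) + 1 ≤ ((M x a : ℝ) + 1) + ((M x b : ℝ) + 1)
    have hc : ((M x (a+b) : ℤ) : ℝ) ≤ ((M x a + M x b + 1 : ℤ) : ℝ) := by
      exact_mod_cast hMsub x a b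
    push_cast at hc
    linarith
  have hbdd : ∀ x : Q, BddBelow (Set.range fun n : ℕ => ((M x n : ℝ) + 1) / n) := by
    intro x
    refine ⟨min ((M x 1 : ℝ)) 0, ?_⟩
    rintro v ⟨n, rfl⟩
    rcases Nat.eq_zero_or_pos n with rfl | hn
    · simp
    · have hnn : (0:ℝ) < n := by exact_mod_cast hn
      have h1 : ((n:ℝ)) * (M x 1 : ℝ) ≤ (M x n : ℝ) := by exact_mod_cast hMlin x n
      have h2 : (M x 1 : ℝ) ≤ ((M x n : ℝ) + 1)/n := by
        rw [le_div_iff₀ hnn]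
        nlinarith
      exact le_trans (min_le_left _ _) h2
  set φ : Q → ℝ := fun x => (hsubadd x).lim with hφ
  have hT : ∀ x : Q, Tendsto (fun n : ℕ => (M x n : ℝ) / n) atTop (𝓝 (φ x)) := by
    intro x
    have h0 := (hsubadd x).tendsto_lim (hbdd x)
    have he : (fun n : ℕ => (M x n : ℝ)/n) = fun n : ℕ => ((M x n : ℝ) + 1)/n - 1/n := by
      funext n; rw [add_div]; ring
    rw [he]
    simpa using h0.sub tendsto_one_div_atTop_nhds_zero_nat
  -- bounds for arbitrary elements
  have hbnd : ∀ z : Q, ∃ K : ℤ, 0 ≤ K ∧ (p (u ^ (-K)) z ∨ u ^ (-K) = z) ∧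
      (p z (u ^ K) ∨ z = u ^ K) := by
    intro z
    have hK1 := le_max_left (mf z + 1) (-(mf z))
    have hK2 := le_max_right (mf z + 1) (-(mf z))
    refine ⟨max (mf z + 1) (-(mf z)), by omega, ?_, ?_⟩
    · have h1 : -(max (mf z + 1) (-(mf z))) ≤ mf z := by omega
      rcases eq_or_lt_of_le h1 with heq | hlt
      · rw [heq]; exact hmf1 z
      · exact Or.inl (hpL (zpow_lt hLO hu hlt) (hmf1 z))
    · have h2 : mf z + 1 ≤ max (mf z + 1) (-(mf z)) := hK1
      rcases eq_or_lt_of_le h2 with heq | hlt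
      · rw [← heq]; exact Or.inl (hmf2 z)
      · exact Or.inl (ltr hLO (hmf2 z) (zpow_lt hLO hu hlt))
  -- conjugation invariance of φ
  have hconj : ∀ (g z : Q), φ (g * z * g⁻¹) = φ z := by
    intro g z
    obtain ⟨K, hK0, hK1, hK2⟩ := hbnd g
    obtain ⟨K', hK0', hK1', hK2'⟩ := hbnd g⁻¹
    have hest : ∀ n : ℕ, M z n - (K + K') ≤ M (g*z*g⁻¹) n ∧
        M (g*z*g⁻¹) n ≤ M z n + (K + K') := by
      intro n
      have hpow : (g*z*g⁻¹)^n = g * z^n * g⁻¹ := conj_pow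
      constructor
      · refine hlow _ _ ?_
        have h3 := hL3 hK1 (hmf1 (z^n)) hK1'
        simp only [hM]
        rw [hpow]
        have he : u ^ (-K) * u ^ (mf (z^n)) * u ^ (-K') = u ^ (mf (z^n) - (K + K')) := by
          rw [← zpow_add, ← zpow_add]; congr 1; ring
        rwa [he] at h3
      · refine hup _ _ ?_
        have h3 := hLpL hK2 (hmf2 (z^n)) hK2'
        simp only [hM]
        rw [hpow]
        have he : u ^ K * u ^ (mf (z^n) + 1) * u ^ K' = u ^ ((mf (z^n) + (K + K')) + 1) := by
          rw [← zpow_add, ← zpow_add]; congr 1; ring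
        rwa [he] at h3
    have hdiff : Tendsto (fun n : ℕ => ((M (g*z*g⁻¹) n : ℝ) - (M z n : ℝ))/n)
        atTop (𝓝 0) := by
      apply squeeze_zero_norm (a := fun n : ℕ => ((K + K' : ℤ) : ℝ)/n)
      · intro n
        rcases Nat.eq_zero_or_pos n with rfl | hn
        · simp
        · have hnn : (0:ℝ) < n := by exact_mod_cast hn
          rw [Real.norm_eq_abs, abs_div, abs_of_pos hnn]
          have hnum : |(M (g*z*g⁻¹) n : ℝ) - (M z n : ℝ)| ≤ ((K + K' : ℤ) : ℝ) := by
            have h1 := (hest n).1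
            have h2 := (hest n).2
            rw [abs_le]
            constructor
            · have : ((M z n - (K + K') : ℤ) : ℝ) ≤ ((M (g*z*g⁻¹) n : ℤ) : ℝ) := by
                exact_mod_cast h1
              push_cast at this ⊢
              linarith
            · have : ((M (g*z*g⁻¹) n : ℤ) : ℝ) ≤ ((M z n + (K + K') : ℤ) : ℝ) := by
                exact_mod_cast h2
              push_cast at this ⊢
              linarith
          gcongr
      · exact tendsto_const_div_atTop_nhds_zero_nat _
    have hT2 := (hT z).add hdiff
    have he : (fun n : ℕ => (M z n : ℝ)/n + ((M (g*z*g⁻¹) n : ℝ) - (M z n : ℝ))/n)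
        = fun n : ℕ => (M (g*z*g⁻¹) n : ℝ)/n := by
      funext n; rw [← add_div]; congr 1; ring
    rw [he] at hT2
    have := tendsto_nhds_unique (hT (g*z*g⁻¹)) hT2
    simpa using this
  -- additivity in the sandwich case
  have hadd1 : ∀ x y : Q, (p (y*x) (x*y) ∨ y*x = x*y) → φ (x*y) = φ x + φ y := by
    intro x y hc
    have key2 : ∀ k : ℕ, p (y*x^k) (x^k*y) ∨ y*x^k = x^k*y := by
      intro k; induction k with
      | zero => exact Or.inr (by simp)
      | succ k ih =>
          have h1 : p (y*x^(k+1)) (x^k*y*x) ∨ y*x^(k+1) = x^k*y*x := by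
            have h2 := hLmul x ih
            have he : y*x^k*x = y*x^(k+1) := by rw [mul_assoc, ← pow_succ]
            rwa [he] at h2
          have h2 : p (x^k*y*x) (x^(k+1)*y) ∨ x^k*y*x = x^(k+1)*y := by
            have h3 := hmulL' (x^k) hc
            have he1 : x^k*(y*x) = x^k*y*x := by rw [mul_assoc]
            have he2 : x^k*(x*y) = x^(k+1)*y := by rw [← mul_assoc, ← pow_succ]
            rwa [he1, he2] at h3
          exact hLtrans h1 h2
    have key1 : ∀ k : ℕ, p (y^k*x) (x*y^k) ∨ y^k*x = x*y^k := by
      intro k; induction k with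
      | zero => exact Or.inr (by simp)
      | succ k ih =>
          have h1 : p (y^(k+1)*x) (y*(x*y^k)) ∨ y^(k+1)*x = y*(x*y^k) := by
            have h2 := hmulL' y ih
            have he : y*(y^k*x) = y^(k+1)*x := by rw [← mul_assoc, ← pow_succ']
            rwa [he] at h2
          have h2 : p (y*(x*y^k)) (x*y^(k+1)) ∨ y*(x*y^k) = x*y^(k+1) := by
            have h3 := hLmul (y^k) hc
            have he1 : y*x*y^k = y*(x*y^k) := by rw [mul_assoc]
            have he2 : x*y*y^k = x*y^(k+1) := by rw [mul_assoc, ← pow_succ']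
            rwa [he1, he2] at h3
          exact hLtrans h1 h2
    have upper : ∀ n : ℕ, p ((x*y)^n) (x^n*y^n) ∨ (x*y)^n = x^n*y^n := by
      intro n; induction n with
      | zero => exact Or.inr (by simp)
      | succ n ih =>
          have h1 : p ((x*y)^(n+1)) (x^n*y^n*(x*y)) ∨ (x*y)^(n+1) = x^n*y^n*(x*y) := by
            have h2 := hLmul (x*y) ih
            rwa [← pow_succ] at h2
          have h2 : p (x^n*y^n*(x*y)) (x^(n+1)*y^(n+1)) ∨
              x^n*y^n*(x*y) = x^(n+1)*y^(n+1) := by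
            have h3 := hLmul y (hmulL' (x^n) (key1 n))
            have he1 : x^n*(y^n*x)*y = x^n*y^n*(x*y) := by
              simp only [mul_assoc]
            have he2 : x^n*(x*y^n)*y = x^(n+1)*y^(n+1) := by
              simp only [pow_succ, pow_succ', mul_assoc]
            rwa [he1, he2] at h3
          exact hLtrans h1 h2
    have lower : ∀ n : ℕ, p (y^n*x^n) ((x*y)^n) ∨ y^n*x^n = (x*y)^n := by
      intro n; induction n with
      | zero => exact Or.inr (by simp)
      | succ n ih =>
          have h1 : p (y^(n+1)*x^(n+1)) (y^n*x^n*(x*y)) ∨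
              y^(n+1)*x^(n+1) = y^n*x^n*(x*y) := by
            have h2 := hmulL' (y^n) (key2 (n+1))
            have he1 : y^n*(y*x^(n+1)) = y^(n+1)*x^(n+1) := by
              rw [pow_succ y n, mul_assoc]
            have he2 : y^n*(x^(n+1)*y) = y^n*x^n*(x*y) := by
              rw [pow_succ x n]
              simp only [mul_assoc]
            rwa [he1, he2] at h2
          have h2 : p (y^n*x^n*(x*y)) ((x*y)^(n+1)) ∨ y^n*x^n*(x*y) = (x*y)^(n+1) := by
            have h3 := hLmul (x*y) ih
            rwa [← pow_succ] at h3
          exact hLtrans h1 h2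
    have hest : ∀ n : ℕ, M x n + M y n ≤ M (x*y) n ∧ M (x*y) n ≤ M x n + M y n + 1 := by
      intro n
      constructor
      · refine hlow _ _ ?_
        have h1 := hL2 (hmf1 (y^n)) (hmf1 (x^n))
        rw [← zpow_add] at h1
        have h2 := hLtrans h1 (lower n)
        simp only [hM]
        have he : mf (y^n) + mf (x^n) = mf (x^n) + mf (y^n) := by ring
        rwa [he] at h2
      · refine hup _ _ ?_
        have h1 := pmul2 hLO parch (hmf2 (x^n)) (hmf2 (y^n))
        rw [← zpow_add] at h1
        have h2 := hLp (upper n) h1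
        simp only [hM]
        have he : (mf (x^n) + 1) + (mf (y^n) + 1) = (mf (x^n) + mf (y^n) + 1) + 1 := by ring
        rwa [he] at h2
    have hdiff : Tendsto
        (fun n : ℕ => ((M (x*y) n : ℝ) - (M x n : ℝ) - (M y n : ℝ))/n) atTop (𝓝 0) := by
      apply squeeze_zero_norm (a := fun n : ℕ => (1 : ℝ)/n)
      · intro n
        rcases Nat.eq_zero_or_pos n with rfl | hn
        · simp
        · have hnn : (0:ℝ) < n := by exact_mod_cast hn
          rw [Real.norm_eq_abs, abs_div, abs_of_pos hnn]
          have hnum : |(M (x*y) n : ℝ) - (M x n : ℝ) - (M y n : ℝ)| ≤ 1 := by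
            have h1 := (hest n).1
            have h2 := (hest n).2
            rw [abs_le]
            constructor
            · have : ((M x n + M y n : ℤ) : ℝ) ≤ ((M (x*y) n : ℤ) : ℝ) := by
                exact_mod_cast h1
              push_cast at this ⊢
              linarith
            · have : ((M (x*y) n : ℤ) : ℝ) ≤ ((M x n + M y n + 1 : ℤ) : ℝ) := by
                exact_mod_cast h2
              push_cast at this ⊢
              linarith
          gcongr
      · exact tendsto_const_div_atTop_nhds_zero_nat _
    have hT3 := (((hT x).add (hT y)).add hdiff)
    have he : (fun n : ℕ => ((M x n : ℝ)/n + (M y n : ℝ)/n) +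
        ((M (x*y) n : ℝ) - (M x n : ℝ) - (M y n : ℝ))/n)
        = fun n : ℕ => (M (x*y) n : ℝ)/n := by
      funext n
      rw [← add_div, ← add_div]
      congr 1; ring
    rw [he] at hT3
    have := tendsto_nhds_unique (hT (x*y)) hT3
    rw [this]; ring
  -- full additivity
  have hadd : ∀ a b : Q, φ (a * b) = φ a + φ b := by
    intro a b
    rcases eq_or_ne (b*a) (a*b) with heq | hne
    · exact hadd1 a b (Or.inr heq)
    rcases ltot hLO hne with h | h
    · exact hadd1 a b (Or.inl h)
    · have h1 := hadd1 b a (Or.inl h)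
      have h2 : φ (a*b) = φ (b*a) := by
        have h3 := hconj a (b*a)
        have he2 : a * (b*a) * a⁻¹ = a*b := by group
        rw [he2] at h3
        rw [h3]
      rw [h2, h1]; ring
  -- φ u = 1
  have hMu : ∀ n : ℕ, M u n = n := by
    intro n
    have h1 : mf (u^n) ≤ (n : ℤ) := by
      refine hup _ _ ?_
      have h2 : p (u^(n:ℤ)) (u^((n:ℤ)+1)) := zpow_lt hLO hu (by omega)
      rwa [zpow_natCast] at h2
    have h2 : (n:ℤ) ≤ mf (u^n) := hlow _ _ (Or.inr (zpow_natCast u n))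
    simp only [hM]; omega
  have hTu : Tendsto (fun n : ℕ => (M u n : ℝ)/n) atTop (𝓝 1) := by
    have he : ∀ᶠ n : ℕ in atTop, (1 : ℝ) = (M u n : ℝ)/n := by
      filter_upwards [eventually_ge_atTop 1] with n hn
      rw [hMu n]
      have hnz : (n:ℝ) ≠ 0 := by
        have : (0:ℕ) < n := hn
        exact_mod_cast this.ne'
      field_simp
      norm_cast
    exact Tendsto.congr' he tendsto_const_nhds
  exact ⟨φ, hadd, tendsto_nhds_unique (hT u) hTu⟩

end Holder

/-- Main order-theoretic theorem: a nontrivial finitely generated group with a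
Conradian left order admits a nontrivial additive real-valued map. -/
theorem conradian_fg_hom {G : Type*} [Group G] {r : G → G → Prop}
    (hLO : IsLeftOrder r) (hC : IsConradian r)
    {S : Set G} (hfin : S.Finite) (hgen : Subgroup.closure S = ⊤)
    {x0 : G} (hx0 : x0 ≠ 1) :
    ∃ ψ : G → ℝ, (∀ a b, ψ (a * b) = ψ a + ψ b) ∧ ∃ g, ψ g ≠ 0 := by
  classical
  have hbot : (⊥ : Subgroup G) ≠ ⊤ := by
    intro h
    have h2 : x0 ∈ (⊥ : Subgroup G) := h ▸ Subgroup.mem_top x0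
    exact hx0 (Subgroup.mem_bot.1 h2)
  set N := Cmax hLO hbot with hNdef
  haveI hNn : N.Normal := Cmax_normal hLO hC hbot
  have hconv : IsConvex r N := convex_Cmax hLO hbot
  have hNne : N ≠ ⊤ := Cmax_ne_top hLO hbot hfin hgen
  set mk : G → G ⧸ N := QuotientGroup.mk with hmkdef
  have hmkmul : ∀ a b : G, mk (a * b) = mk a * mk b := fun a b => rfl
  have hmksurj : ∀ A : G ⧸ N, ∃ a, mk a = A := fun A => QuotientGroup.mk_surjective A
  set rQ : (G ⧸ N) → (G ⧸ N) → Prop :=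
    fun A B => A ≠ B ∧ ∃ x y, mk x = A ∧ mk y = B ∧ r x y with hrQdef
  -- the block lemma
  have block : ∀ {A B}, rQ A B → ∀ x y, mk x = A → mk y = B → r x y := by
    rintro A B ⟨hne, x0', y0', hx0', hy0', hxy⟩ x y hx hy
    have hcx : x0'⁻¹ * x ∈ N := QuotientGroup.eq.mp (hx0'.trans hx.symm)
    have hdy : y0'⁻¹ * y ∈ N := QuotientGroup.eq.mp (hy0'.trans hy.symm)
    have hw : r 1 (x0'⁻¹ * y0') := by
      have := lmul hLO x0'⁻¹ hxy; simpa using this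
    have hwN : x0'⁻¹ * y0' ∉ N := by
      intro hmem
      exact hne (hx0' ▸ hy0' ▸ (QuotientGroup.eq.mpr hmem))
    have hcw : (x0'⁻¹*y0')⁻¹ * (x0'⁻¹*x)⁻¹ * (x0'⁻¹*y0') ∈ N := by
      have h2 := hNn.conj_mem _ (inv_mem hcx) (x0'⁻¹*y0')⁻¹
      simpa using h2
    have heN : ((x0'⁻¹*y0')⁻¹ * (x0'⁻¹*x)⁻¹ * (x0'⁻¹*y0')) * (y0'⁻¹*y) ∈ N :=
      mul_mem hcw hdy
    set w := x0'⁻¹*y0' with hwdef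
    set e := ((x0'⁻¹*y0')⁻¹ * (x0'⁻¹*x)⁻¹ * (x0'⁻¹*y0')) * (y0'⁻¹*y) with hedef
    have he : x⁻¹ * y = w * e := by rw [hwdef, hedef]; group
    have hclaim : r 1 (w * e) := by
      rcases eq_or_ne (w * e) 1 with h1 | h1
      · exfalso
        have : w = e⁻¹ := eq_inv_of_mul_eq_one_left h1
        exact hwN (this ▸ inv_mem heN)
      rcases ltot hLO h1 with h2 | h2
      · exfalso
        have h3 : r e w⁻¹ := by
          have := lmul hLO w⁻¹ h2; simpa using this
        have h4 : r w⁻¹ e :=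
          lt_mem_of_not_mem hLO hconv heN
            (fun hmem => hwN (by simpa using inv_mem hmem)) (pos_inv hLO hw)
        exact lasym hLO h3 h4
      · exact h2
    have h5 := lmul hLO x hclaim
    rw [← he] at h5
    simpa using h5
  -- rQ is a left order
  have hirrQ : ∀ A, ¬ rQ A A := fun A h => h.1 rfl
  have htotQ : ∀ {A B}, A ≠ B → rQ A B ∨ rQ B A := by
    intro A B hne
    obtain ⟨a, ha⟩ := hmksurj A
    obtain ⟨b, hb⟩ := hmksurj B
    have hab : a ≠ b := by rintro rfl; exact hne (ha ▸ hb ▸ rfl)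
    rcases ltot hLO hab with h | h
    · exact Or.inl ⟨hne, a, b, ha, hb, h⟩
    · exact Or.inr ⟨hne.symm, b, a, hb, ha, h⟩
  have htransQ : ∀ {A B C}, rQ A B → rQ B C → rQ A C := by
    intro A B C h1 h2
    obtain ⟨a, ha⟩ := hmksurj A
    obtain ⟨b, hb⟩ := hmksurj B
    obtain ⟨c, hc⟩ := hmksurj C
    have hab := block h1 a b ha hb
    have hbc := block h2 b c hb hc
    have hAC : A ≠ C := by
      rintro rfl
      exact lasym hLO hab (block h2 b a hb ha)
    exact ⟨hAC, a, c, ha, hc, ltr hLO hab hbc⟩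
  have hmulQ : ∀ (P : G ⧸ N) {A B}, rQ A B → rQ (P * A) (P * B) := by
    intro P A B h
    obtain ⟨g, hg⟩ := hmksurj P
    obtain ⟨hne, x, y, hx, hy, hxy⟩ := h
    refine ⟨fun h2 => hne (mul_left_cancel h2), g*x, g*y, ?_, ?_, lmul hLO g hxy⟩
    · rw [hmkmul, hx, hg]
    · rw [hmkmul, hy, hg]
  have hLOQ : IsLeftOrder rQ := by
    refine ⟨?_, fun h f g hfg => hmulQ h hfg⟩
    refine { trichotomous := ?_, irrefl := hirrQ, trans := fun a b c h1 h2 => htransQ h1 h2 }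
    intro a b
    rcases eq_or_ne a b with rfl | hne
    · exact fun _ _ => rfl
    · rcases htotQ hne with h | h
      · exact fun h1 _ => absurd h h1
      · exact fun _ h2 => absurd h h2
  -- nontriviality of the quotient and a positive element
  obtain ⟨z, hzN⟩ : ∃ z, z ∉ N := by
    by_contra h
    push_neg at h
    exact hNne (eq_top_iff.2 fun z _ => h z)
  have hz1 : mk z ≠ 1 := fun h => hzN ((QuotientGroup.eq_one_iff z).1 h)
  obtain ⟨U, hU⟩ : ∃ U : G ⧸ N, rQ 1 U := by
    rcases htotQ (Ne.symm hz1) with h | h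
    · exact ⟨mk z, h⟩
    · refine ⟨(mk z)⁻¹, ?_⟩
      have := hmulQ (mk z)⁻¹ h
      simpa using this
  -- Archimedean property
  have harch : ∀ A B : G ⧸ N, rQ 1 A → rQ 1 B → ∃ n : ℕ, rQ B (A ^ n) := by
    intro A B hA hB
    obtain ⟨a, ha⟩ := hmksurj A
    obtain ⟨b, hb⟩ := hmksurj B
    have hapos : r 1 a := block hA 1 a rfl ha
    have haN : a ∉ N := by
      intro hmem
      exact hA.1 (ha ▸ ((QuotientGroup.eq_one_iff a).2 hmem).symm)
    obtain ⟨n, hn⟩ := Vtop hLO hC hbot hapos haN b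
    have hmkpow : ∀ m : ℕ, mk (a ^ m) = A ^ m := by
      intro m
      induction m with
      | zero => rw [pow_zero, pow_zero]; exact QuotientGroup.mk_one N
      | succ m ih => rw [pow_succ, pow_succ, hmkmul, ih, ha]
    rcases eq_or_ne B (A ^ n) with heq | hne
    · refine ⟨n + 1, ?_⟩
      have h2 := hmulQ (A ^ n) hA
      rw [mul_one, ← pow_succ] at h2
      rw [heq]
      exact h2
    · exact ⟨n, hne, b, a ^ n, hb, hmkpow n, hn⟩
  -- Hölder homomorphism on the quotient
  obtain ⟨φ, hφadd, hφu⟩ := holder_hom hLOQ harch hU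
  refine ⟨fun g => φ (mk g), fun a b => ?_, ?_⟩
  · show φ (mk (a*b)) = φ (mk a) + φ (mk b)
    rw [hmkmul]
    exact hφadd (mk a) (mk b)
  obtain ⟨w, hw⟩ := hmksurj U
  refine ⟨w, ?_⟩
  show φ (mk w) ≠ 0
  rw [hw, hφu]
  norm_num

section Braid
variable {m : ℕ}

/-- The `i`-th standard generator (as a `ℕ`-indexed family). -/
def bs (m : ℕ) (i : ℕ) : PresentedGroup (braidRels m) :=
  if h : i < m then PresentedGroup.of ⟨i, h⟩ else 1

theorem rel_one {x : FreeGroup (Fin m)} (h : x ∈ braidRels m) :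
    (QuotientGroup.mk x : PresentedGroup (braidRels m)) = 1 := by
  rw [QuotientGroup.eq_one_iff]
  exact Subgroup.subset_normalClosure h

theorem braid_rel {i : ℕ} (h : i + 1 < m) :
    bs m i * bs m (i+1) * bs m i = bs m (i+1) * bs m i * bs m (i+1) := by
  have hi : i < m := by omega
  have hmem : (FreeGroup.of (⟨i, hi⟩ : Fin m) * FreeGroup.of (⟨i+1, h⟩ : Fin m) *
      FreeGroup.of (⟨i, hi⟩ : Fin m) *
      (FreeGroup.of (⟨i+1, h⟩ : Fin m) * FreeGroup.of (⟨i, hi⟩ : Fin m) *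
        FreeGroup.of (⟨i+1, h⟩ : Fin m))⁻¹) ∈ braidRels m := by
    left
    exact ⟨⟨i, hi⟩, ⟨i+1, h⟩, rfl, rfl⟩
  have h1 := rel_one hmem
  have h2 : (PresentedGroup.of (rels := braidRels m) ⟨i, hi⟩ *
      PresentedGroup.of (rels := braidRels m) ⟨i+1, h⟩ *
      PresentedGroup.of (rels := braidRels m) ⟨i, hi⟩) *
      ((PresentedGroup.of (rels := braidRels m) ⟨i+1, h⟩ *
        PresentedGroup.of (rels := braidRels m) ⟨i, hi⟩ *
        PresentedGroup.of (rels := braidRels m) ⟨i+1, h⟩))⁻¹ = 1 := h1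
  have h3 := mul_inv_eq_one.mp h2
  simp only [bs, dif_pos hi, dif_pos h]
  exact h3

theorem bs_comm {i j : ℕ} (hij : i + 2 ≤ j) (hj : j < m) :
    bs m i * bs m j = bs m j * bs m i := by
  have hi : i < m := by omega
  have hmem : (FreeGroup.of (⟨i, hi⟩ : Fin m) * FreeGroup.of (⟨j, hj⟩ : Fin m) *
      (FreeGroup.of (⟨j, hj⟩ : Fin m) * FreeGroup.of (⟨i, hi⟩ : Fin m))⁻¹) ∈ braidRels m := by
    right
    exact ⟨⟨i, hi⟩, ⟨j, hj⟩, hij, rfl⟩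
  have h1 := rel_one hmem
  have h2 : (PresentedGroup.of (rels := braidRels m) ⟨i, hi⟩ *
      PresentedGroup.of (rels := braidRels m) ⟨j, hj⟩) *
      ((PresentedGroup.of (rels := braidRels m) ⟨j, hj⟩ *
        PresentedGroup.of (rels := braidRels m) ⟨i, hi⟩))⁻¹ = 1 := h1
  have h3 := mul_inv_eq_one.mp h2
  simp only [bs, dif_pos hi, dif_pos hj]
  exact h3

/-- The elements `σᵢ σ₀⁻¹` generating the relevant subgroup. -/
def ba (m : ℕ) (i : ℕ) : PresentedGroup (braidRels m) := bs m i * (bs m 0)⁻¹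

/-- The generating set. -/
def Sset (m : ℕ) : Set (PresentedGroup (braidRels m)) := {x | ∃ i : ℕ, i < m ∧ ba m i = x}

theorem Sset_finite (m : ℕ) : (Sset m).Finite := by
  have : Sset m = (fun i => ba m i) '' (Set.Iio m) := by
    ext x
    constructor
    · rintro ⟨i, hi, rfl⟩; exact ⟨i, hi, rfl⟩
    · rintro ⟨i, hi, rfl⟩; exact ⟨i, hi, rfl⟩
  rw [this]
  exact (Set.finite_Iio m).image _

theorem memA {i : ℕ} (hi : i < m) : ba m i ∈ Subgroup.closure (Sset m) :=
  Subgroup.subset_closure ⟨i, hi, rfl⟩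

theorem ba_zero (m : ℕ) : ba m 0 = 1 := by
  simp [ba]

theorem Pmem {i j : ℕ} (hi : i < m) (hj : j < m) :
    bs m i * (bs m j)⁻¹ ∈ Subgroup.closure (Sset m) := by
  have he : bs m i * (bs m j)⁻¹ = ba m i * (ba m j)⁻¹ := by
    simp only [ba]; group
  rw [he]
  exact mul_mem (memA hi) (inv_mem (memA hj))

theorem Qfar {i j : ℕ} (hfar : i + 2 ≤ j ∨ j + 2 ≤ i) (hi : i < m) (hj : j < m) :
    (bs m i)⁻¹ * bs m j ∈ Subgroup.closure (Sset m) := by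
  have hc : bs m i * bs m j = bs m j * bs m i := by
    rcases hfar with h | h
    · exact bs_comm h hj
    · exact (bs_comm h hi).symm
  have he : (bs m i)⁻¹ * bs m j = bs m j * (bs m i)⁻¹ := by
    have := (Commute.inv_left (a := bs m i) (b := bs m j) hc).eq
    exact this
  rw [he]
  exact Pmem hj hi

theorem Q10 (hm : 4 ≤ m) : (bs m 1)⁻¹ * bs m 0 ∈ Subgroup.closure (Sset m) := by
  have h3 : (3:ℕ) < m := by omega
  have he : (bs m 1)⁻¹ * bs m 0 = ((bs m 1)⁻¹ * bs m 3) * ((bs m 3)⁻¹ * bs m 0) := by group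
  rw [he]
  exact mul_mem (Qfar (Or.inl (by omega)) (by omega) h3) (Qfar (Or.inr (by omega)) h3 (by omega))

theorem stab (hm : 4 ≤ m) {x : PresentedGroup (braidRels m)}
    (hx : x ∈ Subgroup.closure (Sset m)) :
    bs m 0 * x * (bs m 0)⁻¹ ∈ Subgroup.closure (Sset m) := by
  induction hx using Subgroup.closure_induction with
  | mem y hy =>
      obtain ⟨i, hi, rfl⟩ := hy
      rcases i with _ | _ | i
      · rw [ba_zero]
        simpa using (one_mem (Subgroup.closure (Sset m)))
      · have h01 : (0:ℕ) + 1 < m := by omega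
        have hb : bs m 0 * bs m 1 * bs m 0 = bs m 1 * bs m 0 * bs m 1 := braid_rel h01
        have h2 : bs m 1 * (bs m 0 * bs m 1 * (bs m 0)⁻¹) = bs m 0 * bs m 1 := by
          rw [show bs m 1 * (bs m 0 * bs m 1 * (bs m 0)⁻¹)
                = (bs m 1 * bs m 0 * bs m 1) * (bs m 0)⁻¹ from by group, ← hb]
          group
        have hconj : bs m 0 * bs m 1 * (bs m 0)⁻¹ = (bs m 1)⁻¹ * (bs m 0 * bs m 1) :=
          eq_inv_mul_iff_mul_eq.mpr h2
        have he : bs m 0 * ba m 1 * (bs m 0)⁻¹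
            = ((bs m 1)⁻¹ * bs m 0) * ba m 1 := by
          rw [show bs m 0 * ba m 1 * (bs m 0)⁻¹
                = (bs m 0 * bs m 1 * (bs m 0)⁻¹) * (bs m 0)⁻¹ from by rw [ba]; group, hconj]
          rw [ba]; group
        rw [he]
        exact mul_mem (Q10 hm) (memA (by omega))
      · have hi2 : i + 2 < m := hi
        have hc : bs m 0 * bs m (i+2) = bs m (i+2) * bs m 0 := bs_comm (by omega) hi2
        have he : bs m 0 * ba m (i+2) * (bs m 0)⁻¹
            = (bs m 0 * bs m (i+2)) * ((bs m 0)⁻¹ * (bs m 0)⁻¹) := by rw [ba]; group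
        rw [he, hc, show (bs m (i+2) * bs m 0) * ((bs m 0)⁻¹ * (bs m 0)⁻¹)
            = ba m (i+2) from by rw [ba]; group]
        exact memA hi2
  | one => simpa using (one_mem (Subgroup.closure (Sset m)))
  | mul x y _ _ ihx ihy =>
      have he : bs m 0 * (x * y) * (bs m 0)⁻¹
          = (bs m 0 * x * (bs m 0)⁻¹) * (bs m 0 * y * (bs m 0)⁻¹) := by group
      rw [he]
      exact mul_mem ihx ihy
  | inv x _ ihx =>
      have he : bs m 0 * x⁻¹ * (bs m 0)⁻¹ = (bs m 0 * x * (bs m 0)⁻¹)⁻¹ := by group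
      rw [he]
      exact inv_mem ihx

theorem idfar {i j : ℕ} (hi : i < m) (hij : i + 2 ≤ j) (hj : j < m) :
    ba m i * (bs m 0 * ba m j * (bs m 0)⁻¹) = ba m j * (bs m 0 * ba m i * (bs m 0)⁻¹) := by
  rw [show ba m i * (bs m 0 * ba m j * (bs m 0)⁻¹)
      = bs m i * bs m j * ((bs m 0)⁻¹ * (bs m 0)⁻¹) from by simp only [ba]; group]
  rw [show ba m j * (bs m 0 * ba m i * (bs m 0)⁻¹)
      = bs m j * bs m i * ((bs m 0)⁻¹ * (bs m 0)⁻¹) from by simp only [ba]; group]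
  rw [bs_comm hij hj]

theorem idbraid {i : ℕ} (hi1 : i + 1 < m) :
    ba m i * (bs m 0 * ba m (i+1) * (bs m 0)⁻¹) *
      (bs m 0 * (bs m 0 * ba m i * (bs m 0)⁻¹) * (bs m 0)⁻¹)
    = ba m (i+1) * (bs m 0 * ba m i * (bs m 0)⁻¹) *
      (bs m 0 * (bs m 0 * ba m (i+1) * (bs m 0)⁻¹) * (bs m 0)⁻¹) := by
  rw [show ba m i * (bs m 0 * ba m (i+1) * (bs m 0)⁻¹) *
      (bs m 0 * (bs m 0 * ba m i * (bs m 0)⁻¹) * (bs m 0)⁻¹)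
      = bs m i * bs m (i+1) * bs m i * ((bs m 0)⁻¹ * (bs m 0)⁻¹ * (bs m 0)⁻¹) from by
    simp only [ba]; group]
  rw [show ba m (i+1) * (bs m 0 * ba m i * (bs m 0)⁻¹) *
      (bs m 0 * (bs m 0 * ba m (i+1) * (bs m 0)⁻¹) * (bs m 0)⁻¹)
      = bs m (i+1) * bs m i * bs m (i+1) * ((bs m 0)⁻¹ * (bs m 0)⁻¹ * (bs m 0)⁻¹) from by
    simp only [ba]; group]
  rw [braid_rel hi1]

end Braid

set_option maxHeartbeats 1000000 in
theorem swap_braid (a : ℕ) :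
    Equiv.swap a (a+1) * Equiv.swap (a+1) (a+1+1) * Equiv.swap a (a+1)
    = Equiv.swap (a+1) (a+1+1) * Equiv.swap a (a+1) * Equiv.swap (a+1) (a+1+1) := by
  ext x
  simp only [Equiv.Perm.mul_apply, Equiv.swap_apply_def]
  split_ifs <;> omega

set_option maxHeartbeats 1000000 in
theorem swap_far (a b : ℕ) (h : a + 2 ≤ b) :
    Equiv.swap a (a+1) * Equiv.swap b (b+1) = Equiv.swap b (b+1) * Equiv.swap a (a+1) := by
  ext x
  simp only [Equiv.Perm.mul_apply, Equiv.swap_apply_def]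
  split_ifs <;> omega

theorem ba_one_ne_one {m : ℕ} (hm : 4 ≤ m) : ba m 1 ≠ 1 := by
  have hrels : ∀ rel ∈ braidRels m,
      FreeGroup.lift (fun i : Fin m => Equiv.swap (i:ℕ) ((i:ℕ)+1)) rel = 1 := by
    rintro rel (⟨i, j, hij, rfl⟩ | ⟨i, j, hij, rfl⟩)
    · simp only [map_mul, map_inv, FreeGroup.lift_apply_of]
      rw [mul_inv_eq_one, ← hij]
      exact swap_braid (i:ℕ)
    · simp only [map_mul, map_inv, FreeGroup.lift_apply_of]
      rw [mul_inv_eq_one]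
      exact swap_far _ _ hij
  intro hba
  have h1 : (1:ℕ) < m := by omega
  have h0 : (0:ℕ) < m := by omega
  have h2 := congrArg (PresentedGroup.toGroup hrels) hba
  rw [map_one] at h2
  simp only [ba, bs, dif_pos h1, dif_pos h0, map_mul, map_inv,
    PresentedGroup.toGroup.of] at h2
  have h3 := congrArg (fun σ : Equiv.Perm ℕ => σ 0) h2
  simp only [Equiv.Perm.mul_apply, Equiv.swap_inv, Equiv.Perm.one_apply] at h3
  norm_num [Equiv.swap_apply_def] at h3

/-- For `m ≥ 4`, the braid group on `m` generators has no Conradian left order. -/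
theorem braid_not_conradian (m : ℕ) (hm : 4 ≤ m) :
    ¬ ∃ r : PresentedGroup (braidRels m) → PresentedGroup (braidRels m) → Prop,
      IsLeftOrder r ∧ IsConradian r := by
  rintro ⟨r, hLO, hC⟩
  classical
  set H : Subgroup (PresentedGroup (braidRels m)) := Subgroup.closure (Sset m) with hH
  set rH : ↥H → ↥H → Prop := fun x y => r ↑x ↑y with hrH
  have hLOH : IsLeftOrder rH := by
    constructor
    · refine { trichotomous := ?_, irrefl := ?_, trans := ?_ }
      · intro a b
        rcases eq_or_ne a b with rfl | hne
        · exact fun _ _ => rfl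
        · have hne2 : (a : PresentedGroup (braidRels m)) ≠ (b : PresentedGroup (braidRels m)) :=
            fun h => hne (Subtype.ext h)
          rcases ltot hLO hne2 with h | h
          · exact fun h1 _ => absurd h h1
          · exact fun _ h2 => absurd h h2
      · exact fun a h => lirr hLO _ h
      · exact fun a b c h1 h2 => ltr hLO h1 h2
    · intro h f g hfg
      show r ((h*f : ↥H) : PresentedGroup (braidRels m)) ((h*g : ↥H) : _)
      exact lmul hLO (h : PresentedGroup (braidRels m)) hfg
  have hCH : IsConradian rH := by
    intro f g hf hg
    obtain ⟨k, hk⟩ := hC ↑f ↑g hf hg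
    refine ⟨k, ?_⟩
    show r (g : PresentedGroup (braidRels m)) ((f * g^k : ↥H) : _)
    have he : ((f * g^k : ↥H) : PresentedGroup (braidRels m)) = ↑f * (↑g)^k := by
      push_cast
      rfl
    rw [he]
    exact hk
  have hgen : Subgroup.closure ((H.subtype) ⁻¹' (Sset m)) = ⊤ :=
    Subgroup.closure_preimage_eq_top (Sset m)
  have hfinT : ((H.subtype) ⁻¹' (Sset m)).Finite :=
    (Sset_finite m).preimage (Subtype.coe_injective.injOn)
  have hx0 : (⟨ba m 1, memA (by omega)⟩ : ↥H) ≠ 1 := by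
    intro h
    exact ba_one_ne_one hm (congrArg Subtype.val h)
  obtain ⟨ψ, hψadd, g0, hg0⟩ := conradian_fg_hom hLOH hCH hfinT hgen hx0
  have hψ1 : ψ 1 = 0 := by
    have := hψadd 1 1
    rw [mul_one] at this
    linarith
  -- the conjugation endomorphism
  set e : ↥H → ↥H := fun x => ⟨bs m 0 * ↑x * (bs m 0)⁻¹, stab hm x.2⟩ with hedef
  have hemul : ∀ x y : ↥H, e (x*y) = e x * e y := by
    intro x y
    apply Subtype.ext
    show bs m 0 * ((x*y : ↥H) : PresentedGroup (braidRels m)) * (bs m 0)⁻¹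
      = (bs m 0 * ↑x * (bs m 0)⁻¹) * (bs m 0 * ↑y * (bs m 0)⁻¹)
    push_cast
    group
  have hψe : ∀ x y : ↥H, ψ (e (x*y)) = ψ (e x) + ψ (e y) := by
    intro x y
    rw [hemul]
    exact hψadd _ _
  set A : ℕ → ↥H := fun i => if hi : i < m then ⟨ba m i, memA hi⟩ else 1 with hAdef
  have hAco : ∀ {i : ℕ} (hi : i < m), (A i : PresentedGroup (braidRels m)) = ba m i := by
    intro i hi
    simp only [hAdef]
    rw [dif_pos hi]
  have hfar : ∀ {i j : ℕ}, i < m → i+2 ≤ j → j < m →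
      (ψ (A i) + ψ (e (A j)) = ψ (A j) + ψ (e (A i))) ∧
      (ψ (e (A i)) + ψ (e (e (A j))) = ψ (e (A j)) + ψ (e (e (A i)))) := by
    intro i j hi hij hj
    have hid : A i * e (A j) = A j * e (A i) := by
      apply Subtype.ext
      show (A i : PresentedGroup (braidRels m)) * (bs m 0 * (A j : _) * (bs m 0)⁻¹)
        = (A j : _) * (bs m 0 * (A i : _) * (bs m 0)⁻¹)
      rw [hAco hi, hAco hj]
      exact idfar hi hij hj
    constructor
    · have h2 := congrArg ψ hid
      rw [hψadd, hψadd] at h2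
      exact h2
    · have h2 := congrArg (fun z => ψ (e z)) hid
      rw [hψe, hψe] at h2
      exact h2
  have hbr : ∀ {i : ℕ}, i+1 < m →
      ψ (A i) + ψ (e (A (i+1))) + ψ (e (e (A i)))
        = ψ (A (i+1)) + ψ (e (A i)) + ψ (e (e (A (i+1)))) := by
    intro i hi1
    have hid : A i * e (A (i+1)) * e (e (A i)) = A (i+1) * e (A i) * e (e (A (i+1))) := by
      apply Subtype.ext
      show (A i : PresentedGroup (braidRels m)) * (bs m 0 * (A (i+1) : _) * (bs m 0)⁻¹) *
          (bs m 0 * (bs m 0 * (A i : _) * (bs m 0)⁻¹) * (bs m 0)⁻¹)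
        = (A (i+1) : _) * (bs m 0 * (A i : _) * (bs m 0)⁻¹) *
          (bs m 0 * (bs m 0 * (A (i+1) : _) * (bs m 0)⁻¹) * (bs m 0)⁻¹)
      rw [hAco (show i < m by omega), hAco hi1]
      exact idbraid hi1
    have h2 := congrArg ψ hid
    rw [hψadd, hψadd, hψadd, hψadd] at h2
    exact h2
  have hstep : ∀ i : ℕ, i+1 < m → ψ (A i) = ψ (A (i+1)) := by
    intro i hi1
    have hb := hbr hi1
    rcases Nat.lt_or_ge i 2 with hlt | hge
    · interval_cases i
      · have f03 := hfar (show 0 < m by omega) (by omega) (show 3 < m by omega)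
        have f13 := hfar (show 1 < m by omega) (by omega) (show 3 < m by omega)
        linarith [f03.1, f03.2, f13.1, f13.2, hb]
      · have f13 := hfar (show 1 < m by omega) (by omega) (show 3 < m by omega)
        have f03 := hfar (show 0 < m by omega) (by omega) (show 3 < m by omega)
        have f02 := hfar (show 0 < m by omega) (by omega) (show 2 < m by omega)
        linarith [f13.1, f13.2, f03.1, f03.2, f02.1, f02.2, hb]
    · obtain ⟨k, rfl⟩ : ∃ k, i = k + 2 := ⟨i - 2, by omega⟩
      have hk3 : (k+2)+1 = k+3 := rfl
      rw [hk3] at hb ⊢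
      have f1 := hfar (show k < m by omega) (show k+2 ≤ k+2 by omega) (show k+2 < m by omega)
      have f2 := hfar (show k < m by omega) (show k+2 ≤ k+3 by omega) (show k+3 < m by omega)
      linarith [f1.1, f1.2, f2.1, f2.2, hb]
  have hzero : ∀ i : ℕ, i < m → ψ (A i) = 0 := by
    intro i
    induction i with
    | zero =>
        intro _
        have hA0 : A 0 = 1 := by
          apply Subtype.ext
          rw [hAco (show 0 < m by omega), ba_zero]
          rfl
        rw [hA0, hψ1]
    | succ k ih =>
        intro hk1
        rw [← hstep k hk1]
        exact ih (by omega)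
  -- ψ vanishes on all of H
  have hψinv : ∀ x : ↥H, ψ x⁻¹ = - ψ x := by
    intro x
    have := hψadd x x⁻¹
    rw [mul_inv_cancel] at this
    rw [hψ1] at this
    linarith
  set Z : Subgroup ↥H :=
    { carrier := {x | ψ x = 0}
      one_mem' := hψ1
      mul_mem' := by
        intro a b ha hb
        show ψ (a*b) = 0
        rw [hψadd]
        simp only [Set.mem_setOf_eq] at ha hb
        rw [ha, hb]; ring
      inv_mem' := by
        intro a ha
        show ψ a⁻¹ = 0
        simp only [Set.mem_setOf_eq] at ha
        rw [hψinv, ha]; ring } with hZdef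
  have hZ : Subgroup.closure ((H.subtype) ⁻¹' (Sset m)) ≤ Z := by
    rw [Subgroup.closure_le]
    rintro t ht
    obtain ⟨i, hi, hba⟩ := ht
    have ht2 : t = A i := by
      apply Subtype.ext
      rw [hAco hi]
      exact hba.symm
    show ψ t = 0
    rw [ht2]
    exact hzero i hi
  rw [hgen] at hZ
  exact hg0 (hZ (Subgroup.mem_top g0))

end ConradProof

/-- For `n ≥ 5`, the braid group `Bₙ` admits no Conradian left order. -/
theorem stmt_18 (n : ℕ) (hn : 5 ≤ n) :
    ¬ ∃ r : BraidGroup n → BraidGroup n → Prop, IsLeftOrder r ∧ IsConradian r := by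
  exact ConradProof.braid_not_conradian (n - 1) (by omega)
end
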